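/- arXiv:math/0602201 — 3 statements merged into one kernel-verified Lean document; each statement's English description precedes it below -/
import Mathlib

section
/- Let H : ℝ → ℂ be a Schwartz function that does not vanish identically on (0,∞), let F(s) = s·H(s) for s ≥ 0, and let I = ∫₀^∞ |F(t)|² dt/t, which is finite and strictly positive. Then there exist constants C > 0 and δ ∈ (0,1) such that for every a with 1 < a < 1 + δ and every s > 0, the series ∑_{n∈ℤ} |F(a^{2n} s)|² converges and its sum lies between (I/(2 log a))·(1 − C·(a−1)²·|log(a−1)|) and (I/(2 log a))·(1 + C·(a−1)²·|log(a−1)|). -/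
open MeasureTheory Set Real Filter
open scoped ENNReal

lemma schwartz_decay (φ : SchwartzMap ℝ ℂ) (k : ℕ) : ∃ K, 0 ≤ K ∧ ∀ t : ℝ, |t| ^ k * ‖φ t‖ ≤ K := by
  obtain ⟨C, hCpos, hC⟩ := φ.decay k 0
  refine ⟨C, hCpos.le, fun t => ?_⟩
  have := hC t
  simpa only [norm_iteratedFDeriv_zero, Real.norm_eq_abs] using this

lemma pair_bound (φ ψ : SchwartzMap ℝ ℂ) (k : ℕ) :
    ∃ K, 0 ≤ K ∧ ∀ t : ℝ, (1 + t ^ 2) * (|t| ^ k * (‖φ t‖ * ‖ψ t‖)) ≤ K := by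
  obtain ⟨K1, hK1n, hK1⟩ := schwartz_decay φ k
  obtain ⟨K2, hK2n, hK2⟩ := schwartz_decay φ (k + 2)
  obtain ⟨K0, hK0n, hK0⟩ := schwartz_decay ψ 0
  refine ⟨(K1 + K2) * K0, by positivity, fun t => ?_⟩
  have h0 : ‖ψ t‖ ≤ K0 := by simpa using hK0 t
  have e : (1 + t ^ 2) * (|t| ^ k * (‖φ t‖ * ‖ψ t‖))
      = (|t| ^ k * ‖φ t‖ + |t| ^ (k + 2) * ‖φ t‖) * ‖ψ t‖ := by
    have : t ^ 2 = |t| ^ 2 := (sq_abs t).symm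
    rw [this]; ring
  rw [e]
  have h1 : |t| ^ k * ‖φ t‖ + |t| ^ (k + 2) * ‖φ t‖ ≤ K1 + K2 :=
    add_le_add (hK1 t) (hK2 t)
  exact mul_le_mul h1 h0 (norm_nonneg _) (by positivity)

lemma integrable_of_decay (g : ℝ → ℝ) (hg : Continuous g) (K : ℝ) (hK : 0 ≤ K)
    (hb : ∀ t, (1 + t ^ 2) * |g t| ≤ K) : Integrable g := by
  have hi : Integrable (fun t : ℝ => K * (1 + t ^ 2)⁻¹) := integrable_inv_one_add_sq.const_mul K
  refine hi.mono' hg.aestronglyMeasurable (Filter.Eventually.of_forall fun t => ?_)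
  have hpos : (0:ℝ) < 1 + t ^ 2 := by positivity
  have h1 : |g t| ≤ K * (1 + t ^ 2)⁻¹ := by
    rw [mul_comm K, ← div_eq_inv_mul, le_div_iff₀ hpos]
    have := hb t; nlinarith
  calc ‖g t‖ = |g t| := Real.norm_eq_abs _
    _ ≤ K * (1 + t ^ 2)⁻¹ := h1

noncomputable def nsq (H : SchwartzMap ℝ ℂ) (t : ℝ) : ℝ := (H t).re ^ 2 + (H t).im ^ 2
noncomputable def nd1 (H : SchwartzMap ℝ ℂ) (t : ℝ) : ℝ :=
  2 * ((H t).re * (deriv H t).re + (H t).im * (deriv H t).im)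
noncomputable def nd2 (H : SchwartzMap ℝ ℂ) (t : ℝ) : ℝ :=
  2 * ((deriv H t).re ^ 2 + (H t).re * (deriv (deriv H) t).re
    + (deriv H t).im ^ 2 + (H t).im * (deriv (deriv H) t).im)
noncomputable def fH (H : SchwartzMap ℝ ℂ) (t : ℝ) : ℝ := t ^ 2 * nsq H t
noncomputable def fH' (H : SchwartzMap ℝ ℂ) (t : ℝ) : ℝ := 2 * t * nsq H t + t ^ 2 * nd1 H t
noncomputable def vH (H : SchwartzMap ℝ ℂ) (t : ℝ) : ℝ := 2 * t ^ 2 * nsq H t + t ^ 3 * nd1 H t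
noncomputable def vH' (H : SchwartzMap ℝ ℂ) (t : ℝ) : ℝ :=
  4 * t * nsq H t + 5 * t ^ 2 * nd1 H t + t ^ 3 * nd2 H t

lemma nsq_eq (H : SchwartzMap ℝ ℂ) (t : ℝ) : nsq H t = ‖H t‖ ^ 2 := by
  rw [nsq, Complex.sq_norm, Complex.normSq_apply]; ring

lemma vH_eq (H : SchwartzMap ℝ ℂ) (t : ℝ) : vH H t = t * fH' H t := by
  simp only [vH, fH']; ring

lemma deriv_coe (H : SchwartzMap ℝ ℂ) : deriv (⇑H) = ⇑(SchwartzMap.derivCLM ℝ ℂ H) := by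
  funext t; rw [SchwartzMap.derivCLM_apply]

lemma hasDerivAt_H (H : SchwartzMap ℝ ℂ) (t : ℝ) : HasDerivAt (⇑H) (deriv H t) t :=
  (H.differentiable.differentiableAt).hasDerivAt

lemma hasDerivAt_re (H : SchwartzMap ℝ ℂ) (t : ℝ) :
    HasDerivAt (fun x => (H x).re) ((deriv H t).re) t :=
  (Complex.reCLM.hasFDerivAt.comp_hasDerivAt t (hasDerivAt_H H t) : _)

lemma hasDerivAt_im (H : SchwartzMap ℝ ℂ) (t : ℝ) :
    HasDerivAt (fun x => (H x).im) ((deriv H t).im) t :=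
  (Complex.imCLM.hasFDerivAt.comp_hasDerivAt t (hasDerivAt_H H t) : _)

lemma hasDerivAt_nsq (H : SchwartzMap ℝ ℂ) (t : ℝ) : HasDerivAt (nsq H) (nd1 H t) t := by
  have h1 := ((hasDerivAt_re H t).pow 2).add ((hasDerivAt_im H t).pow 2)
  refine h1.congr_deriv ?_
  simp only [nd1]; ring

lemma hasDerivAt_nd1 (H : SchwartzMap ℝ ℂ) (t : ℝ) : HasDerivAt (nd1 H) (nd2 H t) t := by
  have hre := hasDerivAt_re H t
  have him := hasDerivAt_im H t
  have hre' : HasDerivAt (fun x => (deriv H x).re) ((deriv (deriv H) t).re) t := by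
    have := hasDerivAt_re (SchwartzMap.derivCLM ℝ ℂ H) t
    simpa only [← deriv_coe] using this
  have him' : HasDerivAt (fun x => (deriv H x).im) ((deriv (deriv H) t).im) t := by
    have := hasDerivAt_im (SchwartzMap.derivCLM ℝ ℂ H) t
    simpa only [← deriv_coe] using this
  have h1 := (((hre.mul hre').add (him.mul him')).const_mul 2)
  refine h1.congr_deriv ?_
  simp only [nd2]; ring

lemma hasDerivAt_fH (H : SchwartzMap ℝ ℂ) (t : ℝ) : HasDerivAt (fH H) (fH' H t) t := by
  have h1 := (hasDerivAt_pow 2 t).mul (hasDerivAt_nsq H t)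
  refine h1.congr_deriv ?_
  simp only [fH']; ring

lemma hasDerivAt_vH (H : SchwartzMap ℝ ℂ) (t : ℝ) : HasDerivAt (vH H) (vH' H t) t := by
  have h1 := (((hasDerivAt_pow 2 t).mul (hasDerivAt_nsq H t)).const_mul 2).add
    ((hasDerivAt_pow 3 t).mul (hasDerivAt_nd1 H t))
  have e : vH H = (fun y => 2 * (((fun x : ℝ => x ^ 2) * nsq H : ℝ → ℝ) y)) + (fun x : ℝ => x ^ 3) * nd1 H := by
    funext x; simp only [vH, Pi.add_apply, Pi.mul_apply]; ring
  rw [e]; refine h1.congr_deriv ?_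
  simp only [vH']; ring

lemma continuous_H1 (H : SchwartzMap ℝ ℂ) : Continuous (deriv (⇑H)) := by
  rw [deriv_coe]; exact (SchwartzMap.derivCLM ℝ ℂ H).continuous

lemma continuous_H2 (H : SchwartzMap ℝ ℂ) : Continuous (deriv (deriv (⇑H))) := by
  rw [deriv_coe, deriv_coe]; exact (SchwartzMap.derivCLM ℝ ℂ (SchwartzMap.derivCLM ℝ ℂ H)).continuous

lemma continuous_nsq (H : SchwartzMap ℝ ℂ) : Continuous (nsq H) := by
  unfold nsq; fun_prop

lemma continuous_nd1 (H : SchwartzMap ℝ ℂ) : Continuous (nd1 H) := by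
  unfold nd1
  have := continuous_H1 H
  fun_prop

lemma continuous_nd2 (H : SchwartzMap ℝ ℂ) : Continuous (nd2 H) := by
  unfold nd2
  have := continuous_H1 H
  have := continuous_H2 H
  fun_prop

lemma continuous_fH' (H : SchwartzMap ℝ ℂ) : Continuous (fH' H) := by
  unfold fH'
  have := continuous_nsq H; have := continuous_nd1 H
  fun_prop

lemma continuous_vH' (H : SchwartzMap ℝ ℂ) : Continuous (vH' H) := by
  unfold vH'
  have := continuous_nsq H; have := continuous_nd1 H; have := continuous_nd2 H
  fun_prop


lemma pair_plain (φ ψ : SchwartzMap ℝ ℂ) (k : ℕ) :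
    ∃ K, 0 ≤ K ∧ ∀ t : ℝ, |t| ^ k * (‖φ t‖ * ‖ψ t‖) ≤ K := by
  obtain ⟨K1, hK1n, hK1⟩ := schwartz_decay φ k
  obtain ⟨K0, hK0n, hK0⟩ := schwartz_decay ψ 0
  refine ⟨K1 * K0, by positivity, fun t => ?_⟩
  have h0 : ‖ψ t‖ ≤ K0 := by simpa using hK0 t
  have h1 : |t| ^ k * ‖φ t‖ ≤ K1 := hK1 t
  calc |t| ^ k * (‖φ t‖ * ‖ψ t‖) = (|t| ^ k * ‖φ t‖) * ‖ψ t‖ := by ring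
    _ ≤ K1 * K0 := mul_le_mul h1 h0 (norm_nonneg _) (by positivity)

lemma abs_re_le (z : ℂ) : |z.re| ≤ ‖z‖ := by
  exact Complex.abs_re_le_norm z

lemma abs_im_le (z : ℂ) : |z.im| ≤ ‖z‖ := by
  exact Complex.abs_im_le_norm z

lemma prod_re_le (z w : ℂ) : |z.re * w.re + z.im * w.im| ≤ 2 * (‖z‖ * ‖w‖) := by
  have h1 : |z.re * w.re| ≤ ‖z‖ * ‖w‖ := by
    rw [abs_mul]
    exact mul_le_mul (abs_re_le z) (abs_re_le w) (abs_nonneg _) (norm_nonneg _)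
  have h2 : |z.im * w.im| ≤ ‖z‖ * ‖w‖ := by
    rw [abs_mul]
    exact mul_le_mul (abs_im_le z) (abs_im_le w) (abs_nonneg _) (norm_nonneg _)
  calc |z.re * w.re + z.im * w.im| ≤ |z.re * w.re| + |z.im * w.im| := abs_add_le _ _
    _ ≤ 2 * (‖z‖ * ‖w‖) := by linarith

lemma abs_nsq_le (H : SchwartzMap ℝ ℂ) (t : ℝ) : |nsq H t| ≤ ‖H t‖ * ‖H t‖ := by
  have h0 : 0 ≤ nsq H t := by unfold nsq; positivity
  rw [abs_of_nonneg h0, nsq_eq, sq]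

lemma abs_nd1_le (H : SchwartzMap ℝ ℂ) (t : ℝ) : |nd1 H t| ≤ 4 * (‖H t‖ * ‖deriv H t‖) := by
  have h := prod_re_le (H t) (deriv H t)
  simp only [nd1, abs_mul, abs_two]
  nlinarith [abs_nonneg ((H t).re * (deriv (⇑H) t).re + (H t).im * (deriv (⇑H) t).im)]

lemma abs_nd2_le (H : SchwartzMap ℝ ℂ) (t : ℝ) :
    |nd2 H t| ≤ 4 * (‖deriv H t‖ * ‖deriv H t‖) + 4 * (‖H t‖ * ‖deriv (deriv H) t‖) := by
  have h1 := prod_re_le (deriv H t) (deriv H t)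
  have h2 := prod_re_le (H t) (deriv (deriv H) t)
  simp only [nd2]
  have e : (deriv H t).re ^ 2 + (H t).re * (deriv (deriv H) t).re
      + (deriv H t).im ^ 2 + (H t).im * (deriv (deriv H) t).im
      = ((deriv H t).re * (deriv H t).re + (deriv H t).im * (deriv H t).im)
        + ((H t).re * (deriv (deriv H) t).re + (H t).im * (deriv (deriv H) t).im) := by ring
  rw [e, abs_mul, abs_two]
  have := abs_add_le ((deriv H t).re * (deriv H t).re + (deriv H t).im * (deriv H t).im)
    ((H t).re * (deriv (deriv H) t).re + (H t).im * (deriv (deriv H) t).im)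
  nlinarith

lemma deriv_norm (H : SchwartzMap ℝ ℂ) (t : ℝ) :
    ‖(SchwartzMap.derivCLM ℝ ℂ H) t‖ = ‖deriv H t‖ := by rw [SchwartzMap.derivCLM_apply]

lemma gH_decay (H : SchwartzMap ℝ ℂ) :
    ∃ K, 0 ≤ K ∧ ∀ t, (1 + t ^ 2) * |t * nsq H t| ≤ K := by
  obtain ⟨K1, h1n, h1⟩ := pair_bound H H 1
  refine ⟨K1, h1n, fun t => ?_⟩
  have hb := h1 t
  have e : |t * nsq H t| ≤ |t| ^ 1 * (‖H t‖ * ‖H t‖) := by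
    rw [abs_mul, pow_one]
    exact mul_le_mul_of_nonneg_left (abs_nsq_le H t) (abs_nonneg t)
  nlinarith [sq_nonneg t, abs_nonneg (t * nsq H t)]

lemma fH'_decay (H : SchwartzMap ℝ ℂ) :
    ∃ K, 0 ≤ K ∧ ∀ t, (1 + t ^ 2) * |fH' H t| ≤ K := by
  obtain ⟨K1, h1n, h1⟩ := pair_bound H H 1
  obtain ⟨K2, h2n, h2⟩ := pair_bound H (SchwartzMap.derivCLM ℝ ℂ H) 2
  refine ⟨2 * K1 + 4 * K2, by positivity, fun t => ?_⟩
  have hb1 := h1 t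
  have hb2 := h2 t
  rw [deriv_norm] at hb2
  have e : |fH' H t| ≤ 2 * (|t| ^ 1 * (‖H t‖ * ‖H t‖)) + 4 * (|t| ^ 2 * (‖H t‖ * ‖deriv H t‖)) := by
    have t1 : |2 * t * nsq H t| ≤ 2 * (|t| ^ 1 * (‖H t‖ * ‖H t‖)) := by
      rw [abs_mul, abs_mul, abs_two, pow_one, mul_assoc]
      have := mul_le_mul_of_nonneg_left (abs_nsq_le H t) (abs_nonneg t)
      linarith
    have t2 : |t ^ 2 * nd1 H t| ≤ 4 * (|t| ^ 2 * (‖H t‖ * ‖deriv H t‖)) := by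
      rw [abs_mul, abs_pow]
      have := mul_le_mul_of_nonneg_left (abs_nd1_le H t) (pow_nonneg (abs_nonneg t) 2)
      linarith [this]
    calc |fH' H t| ≤ |2 * t * nsq H t| + |t ^ 2 * nd1 H t| := abs_add_le _ _
      _ ≤ _ := by linarith
  nlinarith [sq_nonneg t, abs_nonneg (fH' H t),
    mul_nonneg (mul_nonneg (pow_nonneg (abs_nonneg t) 1) (mul_nonneg (norm_nonneg (H t)) (norm_nonneg (H t)))) (sq_nonneg t)]

lemma vH'_decay (H : SchwartzMap ℝ ℂ) :
    ∃ K, 0 ≤ K ∧ ∀ t, (1 + t ^ 2) * |vH' H t| ≤ K := by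
  set H1 := SchwartzMap.derivCLM ℝ ℂ H with hH1
  set H2 := SchwartzMap.derivCLM ℝ ℂ H1 with hH2
  obtain ⟨K1, h1n, h1⟩ := pair_bound H H 1
  obtain ⟨K2, h2n, h2⟩ := pair_bound H H1 2
  obtain ⟨K3, h3n, h3⟩ := pair_bound H1 H1 3
  obtain ⟨K4, h4n, h4⟩ := pair_bound H H2 3
  refine ⟨4 * K1 + 20 * K2 + 4 * K3 + 4 * K4, by positivity, fun t => ?_⟩
  have hd1 : ‖H1 t‖ = ‖deriv H t‖ := deriv_norm H t
  have hd2 : ‖H2 t‖ = ‖deriv (deriv H) t‖ := by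
    rw [hH2, deriv_norm H1 t, ← deriv_coe]
  have hb1 := h1 t; have hb2 := h2 t; have hb3 := h3 t; have hb4 := h4 t
  rw [hd1] at hb2; rw [hd1] at hb3; rw [hd2] at hb4
  set X1 := |t| ^ 1 * (‖H t‖ * ‖H t‖) with hX1
  set X2 := |t| ^ 2 * (‖H t‖ * ‖deriv H t‖) with hX2
  set X3 := |t| ^ 3 * (‖deriv H t‖ * ‖deriv H t‖) with hX3
  set X4 := |t| ^ 3 * (‖H t‖ * ‖deriv (deriv H) t‖) with hX4
  have e : |vH' H t| ≤ 4 * X1 + 20 * X2 + 4 * X3 + 4 * X4 := by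
    have t1 : |4 * t * nsq H t| ≤ 4 * X1 := by
      rw [abs_mul, abs_mul]
      have := mul_le_mul_of_nonneg_left (abs_nsq_le H t) (abs_nonneg t)
      rw [hX1, pow_one]
      simp only [abs_of_nonneg (by norm_num : (0:ℝ) ≤ 4)]
      nlinarith [abs_nonneg t, abs_nsq_le H t]
    have t2 : |5 * t ^ 2 * nd1 H t| ≤ 20 * X2 := by
      rw [abs_mul, abs_mul, abs_pow]
      have h5 := mul_le_mul_of_nonneg_left (abs_nd1_le H t) (pow_nonneg (abs_nonneg t) 2)
      simp only [abs_of_nonneg (by norm_num : (0:ℝ) ≤ 5)]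
      rw [hX2]; linarith
    have t3 : |t ^ 3 * nd2 H t| ≤ 4 * X3 + 4 * X4 := by
      rw [abs_mul, abs_pow]
      have h5 := mul_le_mul_of_nonneg_left (abs_nd2_le H t) (pow_nonneg (abs_nonneg t) 3)
      rw [hX3, hX4]
      have h6 : |t| ^ 3 * (4 * (‖deriv (⇑H) t‖ * ‖deriv (⇑H) t‖) + 4 * (‖H t‖ * ‖deriv (deriv ⇑H) t‖))
          = 4 * (|t| ^ 3 * (‖deriv (⇑H) t‖ * ‖deriv (⇑H) t‖)) + 4 * (|t| ^ 3 * (‖H t‖ * ‖deriv (deriv ⇑H) t‖)) := by ring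
      linarith
    calc |vH' H t| ≤ |4 * t * nsq H t + 5 * t ^ 2 * nd1 H t| + |t ^ 3 * nd2 H t| := by
          rw [vH']; exact abs_add_le _ _
      _ ≤ |4 * t * nsq H t| + |5 * t ^ 2 * nd1 H t| + |t ^ 3 * nd2 H t| := by
          linarith [abs_add_le (4 * t * nsq H t) (5 * t ^ 2 * nd1 H t)]
      _ ≤ _ := by linarith
  have hsum : (1 + t ^ 2) * |vH' H t| ≤ (1 + t ^ 2) * (4 * X1 + 20 * X2 + 4 * X3 + 4 * X4) :=
    mul_le_mul_of_nonneg_left e (by positivity)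
  have expand : (1 + t ^ 2) * (4 * X1 + 20 * X2 + 4 * X3 + 4 * X4)
      = 4 * ((1 + t ^ 2) * X1) + 20 * ((1 + t ^ 2) * X2) + 4 * ((1 + t ^ 2) * X3)
        + 4 * ((1 + t ^ 2) * X4) := by ring
  rw [expand] at hsum
  linarith

lemma fH_grid_bound (H : SchwartzMap ℝ ℂ) :
    ∃ K, 0 ≤ K ∧ ∀ t : ℝ, 0 < t → |fH H t| ≤ K * t ∧ |fH H t| ≤ K / t := by
  obtain ⟨K1, h1n, h1⟩ := pair_plain H H 1
  obtain ⟨K3, h3n, h3⟩ := pair_plain H H 3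
  refine ⟨max K1 K3, le_max_of_le_left h1n, fun t ht => ?_⟩
  have habs : |t| = t := abs_of_pos ht
  have hfa : |fH H t| = t ^ 2 * nsq H t := by
    rw [fH, abs_mul, abs_pow, habs, abs_of_nonneg (by unfold nsq; positivity)]
  constructor
  · rw [hfa]
    have := h1 t
    rw [habs, pow_one] at this
    calc t ^ 2 * nsq H t = t * (t * nsq H t) := by ring
      _ ≤ t * (t * (‖H t‖ * ‖H t‖)) := by
          have h2 := mul_le_mul_of_nonneg_left (abs_nsq_le H t) ht.le
          have h2' := mul_le_mul_of_nonneg_left h2 ht.le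
          have : t * nsq H t ≤ t * |nsq H t| :=
            mul_le_mul_of_nonneg_left (le_abs_self _) ht.le
          nlinarith [abs_nsq_le H t]
      _ ≤ t * K1 := by
          have := h1 t; rw [habs, pow_one] at this
          exact mul_le_mul_of_nonneg_left this ht.le
      _ ≤ (max K1 K3) * t := by rw [mul_comm]; exact mul_le_mul_of_nonneg_right (le_max_left _ _) ht.le
  · rw [hfa, le_div_iff₀ ht]
    have h3' := h3 t
    rw [habs] at h3'
    calc t ^ 2 * nsq H t * t = t ^ 3 * nsq H t := by ring
      _ ≤ t ^ 3 * (‖H t‖ * ‖H t‖) := by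
          have : nsq H t ≤ ‖H t‖ * ‖H t‖ := (le_abs_self _).trans (abs_nsq_le H t)
          exact mul_le_mul_of_nonneg_left this (by positivity)
      _ ≤ K3 := h3'
      _ ≤ max K1 K3 := le_max_right _ _

lemma vH_grid_bound (H : SchwartzMap ℝ ℂ) :
    ∃ K, 0 ≤ K ∧ ∀ t : ℝ, 0 < t → |vH H t| ≤ K * t ∧ |vH H t| ≤ K / t := by
  set H1 := SchwartzMap.derivCLM ℝ ℂ H with hH1
  obtain ⟨K1, h1n, h1⟩ := pair_plain H H 1
  obtain ⟨K2, h2n, h2⟩ := pair_plain H H1 2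
  obtain ⟨K3, h3n, h3⟩ := pair_plain H H 3
  obtain ⟨K4, h4n, h4⟩ := pair_plain H H1 4
  refine ⟨2 * K1 + 4 * K2 + 2 * K3 + 4 * K4, by positivity, fun t ht => ?_⟩
  have habs : |t| = t := abs_of_pos ht
  have hd1 : ‖H1 t‖ = ‖deriv H t‖ := deriv_norm H t
  have hb1 := h1 t; have hb2 := h2 t; have hb3 := h3 t; have hb4 := h4 t
  rw [habs] at hb1 hb2 hb3 hb4
  rw [hd1] at hb2 hb4
  have hnsq : nsq H t ≤ ‖H t‖ * ‖H t‖ := (le_abs_self _).trans (abs_nsq_le H t)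
  have hnsq0 : 0 ≤ nsq H t := by unfold nsq; positivity
  have hnd1 : |nd1 H t| ≤ 4 * (‖H t‖ * ‖deriv H t‖) := abs_nd1_le H t
  have e : |vH H t| ≤ 2 * t ^ 2 * (‖H t‖ * ‖H t‖) + 4 * t ^ 3 * (‖H t‖ * ‖deriv H t‖) := by
    rw [vH]
    have u1 : |2 * t ^ 2 * nsq H t| ≤ 2 * t ^ 2 * (‖H t‖ * ‖H t‖) := by
      rw [abs_mul, abs_of_nonneg (by positivity : (0:ℝ) ≤ 2 * t ^ 2),
        abs_of_nonneg hnsq0]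
      nlinarith
    have u2 : |t ^ 3 * nd1 H t| ≤ 4 * t ^ 3 * (‖H t‖ * ‖deriv H t‖) := by
      rw [abs_mul, abs_of_nonneg (by positivity : (0:ℝ) ≤ t ^ 3)]
      have h5 := mul_le_mul_of_nonneg_left hnd1 (by positivity : (0:ℝ) ≤ t ^ 3)
      linarith
    calc |2 * t ^ 2 * nsq H t + t ^ 3 * nd1 H t|
        ≤ |2 * t ^ 2 * nsq H t| + |t ^ 3 * nd1 H t| := abs_add_le _ _
      _ ≤ _ := by linarith
  constructor
  · have e2 : 2 * t ^ 2 * (‖H t‖ * ‖H t‖) + 4 * t ^ 3 * (‖H t‖ * ‖deriv H t‖)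
        = (2 * (t ^ 1 * (‖H t‖ * ‖H t‖)) + 4 * (t ^ 2 * (‖H t‖ * ‖deriv H t‖))) * t := by ring
    refine e.trans ?_
    rw [e2]
    have : 2 * (t ^ 1 * (‖H t‖ * ‖H t‖)) + 4 * (t ^ 2 * (‖H t‖ * ‖deriv H t‖))
        ≤ 2 * K1 + 4 * K2 + 2 * K3 + 4 * K4 := by linarith
    exact mul_le_mul_of_nonneg_right this ht.le
  · rw [le_div_iff₀ ht]
    have e2 : (2 * t ^ 2 * (‖H t‖ * ‖H t‖) + 4 * t ^ 3 * (‖H t‖ * ‖deriv H t‖)) * t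
        = 2 * (t ^ 3 * (‖H t‖ * ‖H t‖)) + 4 * (t ^ 4 * (‖H t‖ * ‖deriv H t‖)) := by ring
    calc |vH H t| * t ≤ (2 * t ^ 2 * (‖H t‖ * ‖H t‖) + 4 * t ^ 3 * (‖H t‖ * ‖deriv H t‖)) * t :=
          mul_le_mul_of_nonneg_right e ht.le
      _ = 2 * (t ^ 3 * (‖H t‖ * ‖H t‖)) + 4 * (t ^ 4 * (‖H t‖ * ‖deriv H t‖)) := e2
      _ ≤ 2 * K3 + 4 * K4 := by linarith
      _ ≤ 2 * K1 + 4 * K2 + 2 * K3 + 4 * K4 := by linarith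

lemma integrable_gH (H : SchwartzMap ℝ ℂ) : Integrable (fun t => t * nsq H t) := by
  obtain ⟨K, hKn, hK⟩ := gH_decay H
  exact integrable_of_decay _ (by have := continuous_nsq H; fun_prop) K hKn hK

lemma integrable_fH' (H : SchwartzMap ℝ ℂ) : Integrable (fH' H) := by
  obtain ⟨K, hKn, hK⟩ := fH'_decay H
  exact integrable_of_decay _ (continuous_fH' H) K hKn hK

lemma integrable_vH' (H : SchwartzMap ℝ ℂ) : Integrable (vH' H) := by
  obtain ⟨K, hKn, hK⟩ := vH'_decay H
  exact integrable_of_decay _ (continuous_vH' H) K hKn hK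

lemma fH_nonneg (H : SchwartzMap ℝ ℂ) (t : ℝ) : 0 ≤ fH H t := by
  unfold fH nsq; positivity

lemma tendsto_fH (H : SchwartzMap ℝ ℂ) : Tendsto (fH H) atTop (nhds 0) := by
  obtain ⟨K, hKn, hK⟩ := fH_grid_bound H
  have h1 : Tendsto (fun t : ℝ => K / t) atTop (nhds 0) :=
    Tendsto.div_atTop tendsto_const_nhds tendsto_id
  refine squeeze_zero' ?_ ?_ h1
  · filter_upwards [eventually_gt_atTop 0] with t ht
    exact fH_nonneg H t
  · filter_upwards [eventually_gt_atTop 0] with t ht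
    exact (le_abs_self _).trans ((abs_abs (fH H t)) ▸ (hK t ht).2)

lemma integral_fH'_zero (H : SchwartzMap ℝ ℂ) : ∫ t in Ioi (0:ℝ), fH' H t = 0 := by
  have h := integral_Ioi_of_hasDerivAt_of_tendsto'
    (f := fH H) (f' := fH' H) (a := 0) (m := 0)
    (fun x _ => hasDerivAt_fH H x) ((integrable_fH' H).integrableOn) (tendsto_fH H)
  simpa [fH, nsq] using h

lemma cell_est (f f' v v' : ℝ → ℝ)
    (hfd : ∀ t, 0 < t → HasDerivAt f (f' t) t)
    (hvd : ∀ t, 0 < t → HasDerivAt v (v' t) t)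
    (hvf : ∀ t, 0 < t → v t = t * f' t)
    (hf'c : Continuous f') (hv'c : Continuous v')
    {p q : ℝ} (hp : 0 < p) (hpq : p < q) :
    |Real.log (q / p) * f p - (∫ t in Ioc p q, f t / t)
      + (Real.log (q / p) / 2) * (∫ t in Ioc p q, f' t)|
      ≤ (Real.log (q / p)) ^ 2 / 2 * ∫ t in Ioc p q, |v' t| := by
  have hq : 0 < q := hp.trans hpq
  set h := Real.log (q / p) with hh
  have hlog : h = Real.log q - Real.log p := Real.log_div hq.ne' hp.ne'
  have hhpos : 0 < h := Real.log_pos (by rw [lt_div_iff₀ hp]; linarith)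
  have huIcc : uIcc p q = Icc p q := uIcc_of_le hpq.le
  have hpos : ∀ x ∈ uIcc p q, 0 < x := by
    rw [huIcc]; exact fun x hx => lt_of_lt_of_le hp hx.1
  have hinv_cont : ContinuousOn (fun t : ℝ => t⁻¹) (uIcc p q) :=
    ContinuousOn.inv₀ continuousOn_id (fun x hx => (hpos x hx).ne')
  have hinv_ii : IntervalIntegrable (fun t : ℝ => t⁻¹) volume p q :=
    hinv_cont.intervalIntegrable
  -- integration by parts
  have parts := intervalIntegral.integral_mul_deriv_eq_deriv_mul
    (u := f) (v := fun t => Real.log t - Real.log q) (u' := f') (v' := fun t => t⁻¹)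
    (fun x hx => hfd x (hpos x hx))
    (fun x hx => ((Real.hasDerivAt_log (hpos x hx).ne').sub_const _))
    (hf'c.intervalIntegrable p q) hinv_ii
  -- ∫ L/t = h^2/2
  have hL : (∫ t in p..q, (Real.log q - Real.log t) * t⁻¹)
      = h ^ 2 / 2 := by
    have hd : ∀ x ∈ uIcc p q,
        HasDerivAt (fun t => -(Real.log q - Real.log t) ^ 2 / 2)
          ((Real.log q - Real.log x) * x⁻¹) x := by
      intro x hx
      have h1 : HasDerivAt (fun t => Real.log q - Real.log t) (-x⁻¹) x := by
        simpa using ((Real.hasDerivAt_log (hpos x hx).ne').const_sub (Real.log q))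
      have h2 := (h1.pow 2).neg.div_const 2
      refine h2.congr_deriv ?_
      push_cast
      ring
    have hint : IntervalIntegrable (fun x => (Real.log q - Real.log x) * x⁻¹) volume p q := by
      apply ContinuousOn.intervalIntegrable
      exact (ContinuousOn.sub continuousOn_const
        (Real.continuousOn_log.mono (fun x hx => (hpos x hx).ne'))).mul hinv_cont
    rw [intervalIntegral.integral_eq_sub_of_hasDerivAt hd hint]
    rw [hlog]
    ring_nf
  have hunit : (∫ t in p..q, t⁻¹) = h := _root_.integral_inv (by
    intro hmem; exact absurd (hpos 0 hmem) (lt_irrefl 0))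
  -- subtract: key reduction
  have hfi : IntervalIntegrable f' volume p q := hf'c.intervalIntegrable p q
  have hLfun_cont : ContinuousOn (fun t => Real.log q - Real.log t) (uIcc p q) :=
    ContinuousOn.sub continuousOn_const (Real.continuousOn_log.mono (fun x hx => (hpos x hx).ne'))
  have hfL_ii : IntervalIntegrable (fun t => f' t * (Real.log q - Real.log t)) volume p q :=
    ((hf'c.continuousOn).mul hLfun_cont).intervalIntegrable
  -- from parts
  have key1 : (∫ t in p..q, f t * t⁻¹)
      = h * f p + ∫ t in p..q, f' t * (Real.log q - Real.log t) := by
    rw [parts]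
    have e1 : (∫ t in p..q, f' t * (Real.log t - Real.log q))
        = - ∫ t in p..q, f' t * (Real.log q - Real.log t) := by
      rw [← intervalIntegral.integral_neg]
      congr 1; funext t; ring
    rw [e1, hlog]; ring
  -- the v-shift identity
  set M := ∫ t in Ioc p q, |v' t| with hM
  have hMnonneg : 0 ≤ M := setIntegral_nonneg measurableSet_Ioc (fun t _ => abs_nonneg _)
  have hvbound : ∀ t ∈ Set.uIoc p q, |v t - v p| ≤ M := by
    intro t ht
    rw [uIoc_of_le hpq.le] at ht
    have hpt : p < t := ht.1
    have htq : t ≤ q := ht.2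
    have hft : v t - v p = ∫ r in p..t, v' r := by
      rw [intervalIntegral.integral_eq_sub_of_hasDerivAt
        (fun x hx => hvd x (lt_of_lt_of_le hp ((uIcc_of_le hpt.le ▸ hx).1)))
        (hv'c.intervalIntegrable p t)]
    rw [hft]
    calc |∫ r in p..t, v' r| ≤ ∫ r in p..t, |v' r| :=
          intervalIntegral.abs_integral_le_integral_abs hpt.le
      _ ≤ ∫ r in p..q, |v' r| := intervalIntegral.integral_mono_interval le_rfl hpt.le htq
            (Filter.Eventually.of_forall fun r => abs_nonneg _)
            ((hv'c.abs.continuousOn).intervalIntegrable)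
      _ = M := by rw [hM, intervalIntegral.integral_of_le hpq.le]
  -- pointwise identity of integrands
  have hset : EqOn (fun t => f' t * ((Real.log q - Real.log t) - h / 2))
      (fun t => ((v t - v p) * ((Real.log q - Real.log t) - h / 2)) * t⁻¹
        + v p * ((Real.log q - Real.log t) * t⁻¹ - (h / 2) * t⁻¹)) (uIcc p q) := by
    intro t ht
    have htpos : 0 < t := hpos t ht
    have hft : f' t = v t * t⁻¹ := by
      rw [hvf t htpos]; field_simp
    simp only [hft]; field_simp; ring
  -- bound |L - h/2| ≤ h/2 on the cell
  have hLbound : ∀ t ∈ Set.uIoc p q, |(Real.log q - Real.log t) - h / 2| ≤ h / 2 := by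
    intro t ht
    rw [uIoc_of_le hpq.le] at ht
    have h1 : Real.log t ≤ Real.log q := Real.log_le_log (lt_trans hp ht.1) ht.2
    have h2 : Real.log p < Real.log t := Real.log_lt_log hp ht.1
    rw [abs_le, hlog]
    constructor <;> linarith
  -- continuity of v on the interval
  have hvcont : ContinuousOn v (uIcc p q) := fun x hx =>
    ((hvd x (hpos x hx)).continuousAt).continuousWithinAt
  have hfirst_cont : ContinuousOn
      (fun t => ((v t - v p) * ((Real.log q - Real.log t) - h / 2)) * t⁻¹) (uIcc p q) :=
    (((hvcont.sub continuousOn_const).mul (hLfun_cont.sub continuousOn_const)).mul hinv_cont)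
  have hsecond_cont : ContinuousOn
      (fun t => v p * ((Real.log q - Real.log t) * t⁻¹ - (h / 2) * t⁻¹)) (uIcc p q) :=
    continuousOn_const.mul ((hLfun_cont.mul hinv_cont).sub (continuousOn_const.mul hinv_cont))
  -- compute A
  have eqA : (∫ t in p..q, f' t * ((Real.log q - Real.log t) - h / 2))
      = ∫ t in p..q, ((v t - v p) * ((Real.log q - Real.log t) - h / 2)) * t⁻¹ := by
    rw [intervalIntegral.integral_congr hset]
    rw [intervalIntegral.integral_add (hfirst_cont.intervalIntegrable)
      (hsecond_cont.intervalIntegrable)]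
    have hsec : (∫ t in p..q, v p * ((Real.log q - Real.log t) * t⁻¹ - (h / 2) * t⁻¹)) = 0 := by
      rw [intervalIntegral.integral_const_mul]
      rw [intervalIntegral.integral_sub (f := fun t => (Real.log q - Real.log t) * t⁻¹)
        (g := fun t => (h / 2) * t⁻¹)
        (((hLfun_cont.mul hinv_cont)).intervalIntegrable)
        ((continuousOn_const.mul hinv_cont).intervalIntegrable)]
      rw [intervalIntegral.integral_const_mul, hL, hunit]
      ring
    rw [hsec, add_zero]
  -- bound on A
  have hAbound : |∫ t in p..q, f' t * ((Real.log q - Real.log t) - h / 2)| ≤ h ^ 2 / 2 * M := by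
    rw [eqA]
    have hg_ii : IntervalIntegrable (fun t => M * (h / 2) * t⁻¹) volume p q :=
      (continuousOn_const.mul hinv_cont).intervalIntegrable
    have hb : ∀ᵐ t ∂(volume.restrict (Set.uIoc p q)),
        ‖((v t - v p) * ((Real.log q - Real.log t) - h / 2)) * t⁻¹‖ ≤ M * (h / 2) * t⁻¹ := by
      refine (ae_restrict_iff' measurableSet_uIoc).2 (Filter.Eventually.of_forall ?_)
      intro t ht
      have htpos : 0 < t := by
        rw [uIoc_of_le hpq.le] at ht
        exact lt_trans hp ht.1
      rw [Real.norm_eq_abs, abs_mul, abs_mul, abs_inv, abs_of_pos htpos]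
      have b1 := hvbound t ht
      have b2 := hLbound t ht
      have : |v t - v p| * |Real.log q - Real.log t - h / 2| ≤ M * (h / 2) :=
        mul_le_mul b1 b2 (abs_nonneg _) hMnonneg
      exact mul_le_mul_of_nonneg_right this (inv_nonneg.2 htpos.le)
    have := intervalIntegral.norm_integral_le_of_norm_le hpq.le
      (by rw [← ae_restrict_iff' measurableSet_Ioc, ← uIoc_of_le hpq.le]; exact hb) hg_ii
    rw [Real.norm_eq_abs] at this
    refine this.trans ?_
    rw [intervalIntegral.integral_const_mul, hunit]
    exact le_of_eq (by ring)
  -- final assembly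
  have hIoc1 : (∫ t in Ioc p q, f t / t) = ∫ t in p..q, f t * t⁻¹ := by
    rw [intervalIntegral.integral_of_le hpq.le]
    simp only [div_eq_mul_inv]
  have hIoc2 : (∫ t in Ioc p q, f' t) = ∫ t in p..q, f' t := by
    rw [intervalIntegral.integral_of_le hpq.le]
  have eqexpr : h * f p - (∫ t in Ioc p q, f t / t) + (h / 2) * (∫ t in Ioc p q, f' t)
      = -(∫ t in p..q, f' t * ((Real.log q - Real.log t) - h / 2)) := by
    have hsplit : (∫ t in p..q, f' t * ((Real.log q - Real.log t) - h / 2))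
        = (∫ t in p..q, f' t * (Real.log q - Real.log t)) - (h / 2) * ∫ t in p..q, f' t := by
      have : (fun t => f' t * ((Real.log q - Real.log t) - h / 2))
          = fun t => f' t * (Real.log q - Real.log t) - (h / 2) * f' t := by
        funext t; ring
      rw [this, intervalIntegral.integral_sub hfL_ii
        (hfi.const_mul _), intervalIntegral.integral_const_mul]
    rw [hIoc1, hIoc2, key1, hsplit]
    ring
  rw [eqexpr, abs_neg]
  exact hAbound

lemma zpow_two_mul (a : ℝ) (m : ℤ) : a ^ (2 * m) = (a ^ 2) ^ m := by
  rw [zpow_mul]; norm_cast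

lemma summable_grid {w : ℝ → ℝ} {K : ℝ}
    (hb : ∀ t : ℝ, 0 < t → |w t| ≤ K * t ∧ |w t| ≤ K / t)
    {a s : ℝ} (ha : 1 < a) (hs : 0 < s) :
    Summable (fun m : ℤ => w (a ^ (2 * m) * s)) := by
  have ha0 : 0 < a := lt_trans one_pos ha
  have hb2 : (1:ℝ) < a ^ 2 := one_lt_pow₀ ha (by norm_num)
  have hb2pos : (0:ℝ) < a ^ 2 := lt_trans one_pos hb2
  have hq : (a ^ 2)⁻¹ < 1 := inv_lt_one_of_one_lt₀ hb2
  have hqpos : (0:ℝ) ≤ (a ^ 2)⁻¹ := inv_nonneg.2 hb2pos.le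
  have hgeom : Summable (fun n : ℕ => ((a ^ 2)⁻¹) ^ n) := summable_geometric_of_lt_one hqpos hq
  have hK : 0 ≤ K := by
    have := (hb s hs).1
    nlinarith [abs_nonneg (w s)]
  apply Summable.of_abs
  apply Summable.of_nat_of_neg_add_one
  · refine Summable.of_nonneg_of_le (fun n => abs_nonneg _) (fun n => ?_) (hgeom.mul_left (K / s))
    have hpow : a ^ (2 * (n:ℤ)) = (a ^ 2) ^ (n:ℕ) := by
      rw [zpow_two_mul, zpow_natCast]
    have hpos : 0 < a ^ (2 * (n:ℤ)) * s := by
      rw [hpow]; positivity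
    have h2 := (hb _ hpos).2
    refine h2.trans (le_of_eq ?_)
    rw [hpow]
    rw [div_eq_mul_inv, mul_inv, div_eq_mul_inv, inv_pow]
    ring
  · refine Summable.of_nonneg_of_le (fun n => abs_nonneg _) (fun n => ?_) (hgeom.mul_left (K * s))
    have hpow : a ^ (2 * (-((n:ℤ) + 1))) = ((a ^ 2)⁻¹) ^ (n + 1 : ℕ) := by
      rw [zpow_two_mul]
      rw [show (-((n:ℤ) + 1)) = -((n+1 : ℕ) : ℤ) by push_cast; ring]
      rw [zpow_neg, zpow_natCast, inv_pow]
    have hpos : 0 < a ^ (2 * (-((n:ℤ) + 1))) * s := by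
      rw [hpow]; positivity
    have h1 := (hb _ hpos).1
    refine h1.trans ?_
    rw [hpow]
    have hle : ((a ^ 2)⁻¹ : ℝ) ^ (n + 1 : ℕ) ≤ ((a ^ 2)⁻¹) ^ n :=
      pow_le_pow_of_le_one hqpos hq.le (by omega)
    calc K * (((a ^ 2)⁻¹ : ℝ) ^ (n + 1 : ℕ) * s) = (K * s) * ((a ^ 2)⁻¹) ^ (n + 1 : ℕ) := by ring
      _ ≤ (K * s) * ((a ^ 2)⁻¹) ^ n := mul_le_mul_of_nonneg_left hle (by positivity)

lemma grid_union {b s : ℝ} (hb : 1 < b) (hs : 0 < s) :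
    (⋃ m : ℤ, Ioc (b ^ m * s) (b ^ (m + 1) * s)) = Ioi 0 := by
  have hbpos : 0 < b := lt_trans one_pos hb
  ext t
  simp only [mem_iUnion, mem_Ioc, mem_Ioi]
  constructor
  · rintro ⟨m, h1, h2⟩
    exact lt_trans (by positivity) h1
  · intro ht
    have hts : 0 < t / s := div_pos ht hs
    set r := Real.logb b (t / s) with hr
    refine ⟨⌈r⌉ - 1, ?_, ?_⟩
    · have h1 : ((⌈r⌉ - 1 : ℤ) : ℝ) < r := by
        push_cast
        linarith [Int.ceil_lt_add_one r]
      have h2 : (b : ℝ) ^ ((⌈r⌉ - 1 : ℤ) : ℝ) < b ^ r :=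
        Real.rpow_lt_rpow_of_exponent_lt hb h1
      rw [Real.rpow_logb hbpos hb.ne' hts, Real.rpow_intCast] at h2
      exact (lt_div_iff₀ hs).1 h2
    · have h1 : r ≤ ((⌈r⌉ - 1 + 1 : ℤ) : ℝ) := by
        push_cast
        linarith [Int.le_ceil r]
      have h2 : b ^ r ≤ (b : ℝ) ^ (((⌈r⌉ - 1 + 1 : ℤ) : ℝ)) :=
        Real.rpow_le_rpow_of_exponent_le hb.le h1
      rw [Real.rpow_logb hbpos hb.ne' hts, Real.rpow_intCast] at h2
      exact (div_le_iff₀ hs).1 h2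

lemma grid_disjoint {b s : ℝ} (hb : 1 < b) (hs : 0 < s) :
    Pairwise (Function.onFun Disjoint (fun m : ℤ => Ioc (b ^ m * s) (b ^ (m + 1) * s))) := by
  have hbpos : 0 < b := lt_trans one_pos hb
  have hmono : Monotone (fun m : ℤ => b ^ m * s) := fun m n hmn =>
    mul_le_mul_of_nonneg_right (zpow_le_zpow_right₀ hb.le hmn) hs.le
  have key : ∀ m n : ℤ, m < n →
      Disjoint (Ioc (b ^ m * s) (b ^ (m + 1) * s)) (Ioc (b ^ n * s) (b ^ (n + 1) * s)) := by
    intro m n hmn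
    rw [Set.Ioc_disjoint_Ioc]
    have h1 : b ^ (m + 1) * s ≤ b ^ n * s := hmono (by omega)
    exact le_trans (min_le_left _ _) (le_trans h1 (le_max_right _ _))
  intro m n hmn
  rcases lt_or_gt_of_ne hmn with hlt | hgt
  · exact key m n hlt
  · exact (key n m hgt).symm

lemma integrableOn_fH_div (H : SchwartzMap ℝ ℂ) :
    IntegrableOn (fun t => fH H t / t) (Ioi (0:ℝ)) := by
  apply IntegrableOn.congr_fun ((integrable_gH H).integrableOn)
  · intro t ht
    have htne : (t:ℝ) ≠ 0 := ne_of_gt ht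
    simp only [fH]
    field_simp
  · exact measurableSet_Ioi

lemma integral_fH_div (H : SchwartzMap ℝ ℂ) :
    (∫ t in Ioi (0:ℝ), fH H t / t) = ∫ t in Ioi (0:ℝ), t * nsq H t := by
  apply setIntegral_congr_fun measurableSet_Ioi
  intro t ht
  have : (t:ℝ) ≠ 0 := ne_of_gt ht
  simp only [fH]
  field_simp

lemma main_est (H : SchwartzMap ℝ ℂ) :
    ∃ V, 0 ≤ V ∧ ∀ a : ℝ, 1 < a → ∀ s : ℝ, 0 < s →
      Summable (fun m : ℤ => fH H (a ^ (2 * m) * s)) ∧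
      |2 * Real.log a * (∑' m : ℤ, fH H (a ^ (2 * m) * s)) - ∫ t in Ioi (0:ℝ), fH H t / t|
        ≤ (2 * Real.log a) ^ 2 / 2 * V := by
  obtain ⟨Kg, hKgn, hKg⟩ := fH_grid_bound H
  refine ⟨∫ t in Ioi (0:ℝ), |vH' H t|,
    setIntegral_nonneg measurableSet_Ioi (fun t _ => abs_nonneg _), fun a ha s hs => ?_⟩
  set V := ∫ t in Ioi (0:ℝ), |vH' H t| with hV
  have hsummable : Summable (fun m : ℤ => fH H (a ^ (2 * m) * s)) :=
    summable_grid hKg ha hs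
  refine ⟨hsummable, ?_⟩
  set b := a ^ 2 with hbdef
  have hb : 1 < b := one_lt_pow₀ ha (by norm_num)
  have hbpos : 0 < b := lt_trans one_pos hb
  have hlogb : Real.log b = 2 * Real.log a := by
    rw [hbdef, Real.log_pow]; push_cast; ring
  set S : ℤ → Set ℝ := fun m => Ioc (b ^ m * s) (b ^ (m + 1) * s) with hS
  have hmeas : ∀ m : ℤ, MeasurableSet (S m) := fun m => measurableSet_Ioc
  have hdisj := grid_disjoint hb hs
  have hunion := grid_union hb hs
  have hpm : ∀ m : ℤ, 0 < b ^ m * s := fun m => mul_pos (zpow_pos hbpos m) hs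
  have hpq : ∀ m : ℤ, b ^ m * s < b ^ (m + 1) * s := fun m =>
    mul_lt_mul_of_pos_right (zpow_lt_zpow_right₀ hb (by omega)) hs
  have hratio : ∀ m : ℤ, Real.log ((b ^ (m + 1) * s) / (b ^ m * s)) = Real.log b := by
    intro m
    congr 1
    rw [zpow_add_one₀ (ne_of_gt hbpos)]
    field_simp
  -- HasSum facts
  have hs1 : HasSum (fun m : ℤ => ∫ t in S m, fH H t / t) (∫ t in Ioi (0:ℝ), fH H t / t) := by
    have := hasSum_integral_iUnion hmeas hdisj (by rw [hS]; rw [hunion]; exact integrableOn_fH_div H)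
    rwa [hS, hunion] at this
  have hs2 : HasSum (fun m : ℤ => ∫ t in S m, fH' H t) 0 := by
    have := hasSum_integral_iUnion hmeas hdisj
      (by rw [hS, hunion]; exact (integrable_fH' H).integrableOn)
    rw [hS, hunion] at this
    rwa [integral_fH'_zero H] at this
  have hs3 : HasSum (fun m : ℤ => ∫ t in S m, |vH' H t|) V := by
    have := hasSum_integral_iUnion hmeas hdisj
      (by rw [hS, hunion]; exact (integrable_vH' H).abs.integrableOn)
    rwa [hS, hunion] at this
  -- grid sum
  have hgrid_eq : (fun m : ℤ => fH H (a ^ (2 * m) * s)) = fun m : ℤ => fH H (b ^ m * s) := by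
    funext m; rw [hbdef, ← zpow_two_mul]
  have hsummable' : Summable (fun m : ℤ => fH H (b ^ m * s)) := hgrid_eq ▸ hsummable
  have hsPhi : HasSum (fun m : ℤ => fH H (b ^ m * s)) (∑' m : ℤ, fH H (a ^ (2 * m) * s)) := by
    rw [hgrid_eq]
    exact hsummable'.hasSum
  set Phi := ∑' m : ℤ, fH H (a ^ (2 * m) * s) with hPhi
  set Ia := ∫ t in Ioi (0:ℝ), fH H t / t with hIa
  -- combination
  set c : ℤ → ℝ := fun m =>
      Real.log b * fH H (b ^ m * s) - (∫ t in S m, fH H t / t)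
        + (Real.log b / 2) * (∫ t in S m, fH' H t) with hc
  have hcomb : HasSum c (Real.log b * Phi - Ia + (Real.log b / 2) * 0) :=
    ((hsPhi.mul_left (Real.log b)).sub hs1).add (hs2.mul_left (Real.log b / 2))
  -- cell bounds
  set w : ℤ → ℝ := fun m => (Real.log b) ^ 2 / 2 * ∫ t in S m, |vH' H t| with hw
  have hcell : ∀ m : ℤ, |c m| ≤ w m := by
    intro m
    have := cell_est (fH H) (fH' H) (vH H) (vH' H)
      (fun t _ => hasDerivAt_fH H t) (fun t _ => hasDerivAt_vH H t)
      (fun t _ => vH_eq H t) (continuous_fH' H) (continuous_vH' H)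
      (hpm m) (hpq m)
    rw [hratio m] at this
    exact this
  have hsumw : Summable w := hs3.summable.mul_left _
  have habs_sum : Summable (fun m : ℤ => |c m|) :=
    Summable.of_nonneg_of_le (fun m => abs_nonneg _) hcell hsumw
  have hbound : |Real.log b * Phi - Ia + (Real.log b / 2) * 0|
      ≤ (Real.log b) ^ 2 / 2 * V := by
    rw [← hcomb.tsum_eq]
    have step1 : |∑' m : ℤ, c m| ≤ ∑' m : ℤ, |c m| := by
      have h1 := norm_tsum_le_tsum_norm (f := c) (by simpa [Real.norm_eq_abs] using habs_sum)
      simpa [Real.norm_eq_abs] using h1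
    have step2 : (∑' m : ℤ, |c m|) ≤ ∑' m : ℤ, w m := Summable.tsum_le_tsum hcell habs_sum hsumw
    have step3 : (∑' m : ℤ, w m) = (Real.log b) ^ 2 / 2 * V := by
      rw [hw, tsum_mul_left, hs3.tsum_eq]
    linarith
  rw [mul_zero, add_zero] at hbound
  rwa [hlogb] at hbound

lemma I_pos (H : SchwartzMap ℝ ℂ) (hH : ∃ s : ℝ, 0 < s ∧ H s ≠ 0) :
    0 < ∫ t in Ioi (0:ℝ), fH H t / t := by
  rw [integral_fH_div]
  obtain ⟨s0, hs0, hHs0⟩ := hH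
  set g : ℝ → ℝ := fun t => t * nsq H t with hg
  have hnonneg : 0 ≤ᵐ[volume.restrict (Ioi (0:ℝ))] g := by
    refine (ae_restrict_iff' measurableSet_Ioi).2 (Filter.Eventually.of_forall ?_)
    intro t ht
    have : 0 ≤ nsq H t := by unfold nsq; positivity
    exact mul_nonneg (le_of_lt ht) this
  rw [setIntegral_pos_iff_support_of_nonneg_ae hnonneg ((integrable_gH H).integrableOn)]
  set O : Set ℝ := {t | H t ≠ 0} ∩ Ioi 0 with hO
  have hOopen : IsOpen O := by
    apply IsOpen.inter ?_ isOpen_Ioi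
    exact isOpen_compl_iff.2 (isClosed_singleton.preimage H.continuous)
  have hOsub : O ⊆ Function.support g ∩ Ioi 0 := by
    rintro t ⟨ht1, ht2⟩
    refine ⟨?_, ht2⟩
    have hnorm : 0 < ‖H t‖ := norm_pos_iff.2 ht1
    have : 0 < g t := by
      rw [hg]
      have : 0 < nsq H t := by rw [nsq_eq]; positivity
      exact mul_pos ht2 this
    exact ne_of_gt this
  calc (0:ℝ≥0∞) < volume O := hOopen.measure_pos volume ⟨s0, hHs0, hs0⟩
    _ ≤ volume (Function.support g ∩ Ioi 0) := measure_mono hOsub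

theorem stmt0 (H : SchwartzMap ℝ ℂ) (hH : ∃ s : ℝ, 0 < s ∧ H s ≠ 0)
    (F : ℝ → ℂ) (hF : ∀ s : ℝ, F s = (s : ℂ) * H s)
    (I : ℝ) (hI : I = ∫ t in Set.Ioi (0 : ℝ), ‖F t‖ ^ 2 / t) :
    IntegrableOn (fun t : ℝ => ‖F t‖ ^ 2 / t) (Set.Ioi 0) ∧ 0 < I ∧
    ∃ C > 0, ∃ δ ∈ Set.Ioo (0 : ℝ) 1, ∀ a : ℝ, 1 < a → a < 1 + δ → ∀ s : ℝ, 0 < s →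
      Summable (fun m : ℤ => ‖F (a ^ (2 * m) * s)‖ ^ 2) ∧
      I / (2 * Real.log a) * (1 - C * (a - 1) ^ 2 * |Real.log (a - 1)|) ≤
        (∑' m : ℤ, ‖F (a ^ (2 * m) * s)‖ ^ 2) ∧
      (∑' m : ℤ, ‖F (a ^ (2 * m) * s)‖ ^ 2) ≤
        I / (2 * Real.log a) * (1 + C * (a - 1) ^ 2 * |Real.log (a - 1)|) := by
  have FfH : ∀ t : ℝ, ‖F t‖ ^ 2 = fH H t := by
    intro t
    rw [hF t, norm_mul, Complex.norm_real, mul_pow, Real.norm_eq_abs, sq_abs, fH, nsq_eq]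
  have hfun : (fun t : ℝ => ‖F t‖ ^ 2 / t) = (fun t => fH H t / t) := funext fun t => by
    rw [FfH t]
  have hIeq : I = ∫ t in Ioi (0:ℝ), fH H t / t := by rw [hI, hfun]
  have hIpos : 0 < I := hIeq ▸ I_pos H hH
  obtain ⟨V, hVn, hmain⟩ := main_est H
  refine ⟨by rw [hfun]; exact integrableOn_fH_div H, hIpos, (2 * V + 1) / I, by positivity,
    Real.exp (-1), ⟨Real.exp_pos _, by
      have := Real.exp_lt_one_iff.2 (by norm_num : (-1:ℝ) < 0); linarith⟩, ?_⟩
  intro a ha haδ s hs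
  set C := (2 * V + 1) / I with hC
  obtain ⟨hsummable, hkey⟩ := hmain a ha s hs
  have hgrid_eq : (fun m : ℤ => ‖F (a ^ (2 * m) * s)‖ ^ 2)
      = fun m : ℤ => fH H (a ^ (2 * m) * s) := funext fun m => FfH _
  rw [hgrid_eq]
  rw [← hIeq] at hkey
  set Phi := ∑' m : ℤ, fH H (a ^ (2 * m) * s) with hPhi
  have hloga : 0 < Real.log a := Real.log_pos ha
  have hh : 0 < 2 * Real.log a := by linarith
  have hlog_le : Real.log a ≤ a - 1 := by
    have := Real.log_le_sub_one_of_pos (by linarith : (0:ℝ) < a)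
    linarith
  have ha1 : 0 < a - 1 := by linarith
  have hL : 1 ≤ |Real.log (a - 1)| := by
    have h1 : Real.log (a - 1) < -1 := by
      have := Real.log_lt_log ha1 (by linarith : a - 1 < Real.exp (-1))
      rwa [Real.log_exp] at this
    rw [abs_of_neg (by linarith)]
    linarith
  set L := |Real.log (a - 1)| with hLdef
  set D := C * (a - 1) ^ 2 * L with hD
  have hLnn : 0 ≤ L := abs_nonneg _
  have hCpos : 0 < C := by rw [hC]; positivity
  have hDnn : 0 ≤ D := by
    rw [hD]
    positivity
  have hE : (2 * Real.log a) ^ 2 / 2 * V ≤ I * D := by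
    have h1 : (2 * Real.log a) ^ 2 / 2 ≤ 2 * (a - 1) ^ 2 := by nlinarith
    have h2 : (2 * Real.log a) ^ 2 / 2 * V ≤ 2 * (a - 1) ^ 2 * V :=
      mul_le_mul_of_nonneg_right h1 hVn
    have h3 : I * D = (2 * V + 1) * ((a - 1) ^ 2 * L) := by
      rw [hD, hC]
      field_simp
    have h4 : (a - 1) ^ 2 ≤ (a - 1) ^ 2 * L := by nlinarith
    nlinarith
  have habs := abs_le.mp hkey
  have hlow : I / (2 * Real.log a) * (1 - D) ≤ Phi := by
    rw [div_mul_eq_mul_div, div_le_iff₀ hh]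
    have : I - I * D ≤ 2 * Real.log a * Phi := by linarith [habs.1]
    linarith [this]
  have hhigh : Phi ≤ I / (2 * Real.log a) * (1 + D) := by
    rw [div_mul_eq_mul_div, le_div_iff₀ hh]
    have : 2 * Real.log a * Phi ≤ I + I * D := by linarith [habs.2]
    linarith [this]
  exact ⟨hsummable, hlow, hhigh⟩
end

section
/- Let G : ℝ → ℝ be a twice continuously differentiable function with ‖G''‖_∞ < ∞, and suppose there is K > 0 with |G(u)| ≤ K·e^{−2|u|} for all u ∈ ℝ. Let I = ∫_ℝ G(u) du. Then there exists P > 0 such that for every c ∈ (0, 1/e), every v ∈ [0, c], and every positive integer N, the series ∑_{n∈ℤ} G(nc + v) converges absolutely and |c·∑_{n∈ℤ} G(nc + v) − I| ≤ P·(N·c³ + e^{−2Nc}). -/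
open MeasureTheory intervalIntegral Real Set


lemma stmt1midpt (G : ℝ → ℝ) (hG : ContDiff ℝ 2 G) (M : ℝ)
    (hM : ∀ u, |deriv (deriv G) u| ≤ M) (x h : ℝ) (hh : 0 ≤ h) :
    |(∫ u in (x - h)..(x + h), G u) - 2 * h * G x| ≤ M * h ^ 3 / 3 := by
  have hGc : Continuous G := hG.continuous
  have hG2 : ContDiff ℝ (1 + 1) G := by exact_mod_cast hG
  have hG1 : ContDiff ℝ 1 (deriv G) := (contDiff_succ_iff_deriv.mp hG2).2.2
  have hd1 : Differentiable ℝ G := hG.differentiable (by norm_num)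
  have hd2 : Differentiable ℝ (deriv G) := hG1.differentiable (by norm_num)
  have hdc : Continuous (deriv G) := hG1.continuous
  have hM0 : 0 ≤ M := le_trans (abs_nonneg _) (hM 0)
  have lipD : LipschitzWith M.toNNReal (deriv G) := by
    apply lipschitzWith_of_nnnorm_deriv_le hd2
    intro y
    rw [← NNReal.coe_le_coe, coe_nnnorm, Real.coe_toNNReal _ hM0, Real.norm_eq_abs]
    exact hM y
  have lip : ∀ y z : ℝ, |deriv G y - deriv G z| ≤ M * |y - z| := by
    intro y z
    have := lipD.dist_le_mul y z
    rwa [Real.dist_eq, Real.dist_eq, Real.coe_toNNReal _ hM0] at this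
  have key : ∀ s : ℝ, 0 ≤ s → |G (x + s) + G (x - s) - 2 * G x| ≤ M * s ^ 2 := by
    intro s hs
    have hF : ∀ t : ℝ, HasDerivAt (fun t => G (x + t) + G (x - t))
        (deriv G (x + t) - deriv G (x - t)) t := by
      intro t
      have h1 : HasDerivAt (fun t : ℝ => G (x + t)) (deriv G (x + t)) t := by
        simpa [Function.comp_def] using (hd1 (x + t)).hasDerivAt.comp t ((hasDerivAt_id t).const_add x)
      have h2 : HasDerivAt (fun t : ℝ => G (x - t)) (-deriv G (x - t)) t := by
        simpa [Function.comp_def] using (hd1 (x - t)).hasDerivAt.comp t ((hasDerivAt_id t).const_sub x)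
      exact (h1.add h2).congr_deriv (sub_eq_add_neg _ _).symm
    have hint : IntervalIntegrable (fun t => deriv G (x + t) - deriv G (x - t)) volume 0 s :=
      (((hdc.comp (continuous_const.add continuous_id)).sub
        (hdc.comp (continuous_const.sub continuous_id)))).intervalIntegrable 0 s
    have eq1 : (∫ t in (0:ℝ)..s, (deriv G (x + t) - deriv G (x - t)))
        = (G (x + s) + G (x - s)) - (G (x + 0) + G (x - 0)) :=
      intervalIntegral.integral_eq_sub_of_hasDerivAt (fun t _ => hF t) hint
    have eval : (∫ t in (0:ℝ)..s, M * (2 * t)) = M * s ^ 2 := by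
      rw [intervalIntegral.integral_const_mul, intervalIntegral.integral_const_mul, integral_id]
      ring
    have bnd : ‖∫ t in (0:ℝ)..s, (deriv G (x + t) - deriv G (x - t))‖ ≤
        |∫ t in (0:ℝ)..s, M * (2 * t)| := by
      apply intervalIntegral.norm_integral_le_abs_of_norm_le
      · filter_upwards [ae_restrict_mem (measurableSet_uIoc : MeasurableSet (Set.uIoc (0:ℝ) s))]
          with t ht
        rw [Real.norm_eq_abs]
        have ht' : 0 ≤ t := by
          rcases Set.mem_uIoc.mp ht with h1 | h1
          · exact h1.1.le
          · linarith [h1.1, h1.2]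
        calc |deriv G (x + t) - deriv G (x - t)| ≤ M * |x + t - (x - t)| := lip _ _
          _ = M * (2 * t) := by
              rw [show x + t - (x - t) = 2 * t by ring, abs_of_nonneg (by linarith)]
      · exact (continuous_const.mul (continuous_const.mul continuous_id)).intervalIntegrable 0 s
    rw [eq1, eval, abs_of_nonneg (mul_nonneg hM0 (sq_nonneg s)), Real.norm_eq_abs] at bnd
    calc |G (x + s) + G (x - s) - 2 * G x|
        = |G (x + s) + G (x - s) - (G (x + 0) + G (x - 0))| := by norm_num; ring_nf
      _ ≤ M * s ^ 2 := bnd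
  have e1 : (∫ u in (x - h)..(x + h), G u) = ∫ t in (-h)..h, G (x + t) := by
    rw [intervalIntegral.integral_comp_add_left G x]
    norm_num [sub_eq_add_neg]
  have igr : ∀ a b : ℝ, IntervalIntegrable (fun t => G (x + t)) volume a b := fun a b =>
    (hGc.comp (continuous_const.add continuous_id)).intervalIntegrable a b
  have isub : IntervalIntegrable (fun t => G (x - t)) volume 0 h :=
    (hGc.comp (continuous_const.sub continuous_id)).intervalIntegrable 0 h
  have refl0 : (∫ t in (-h)..(0:ℝ), G (x + t)) = ∫ t in (0:ℝ)..h, G (x - t) := by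
    have := intervalIntegral.integral_comp_neg (a := (0:ℝ)) (b := h) (fun t => G (x + t))
    simp only [neg_zero] at this
    rw [← this]
    simp [sub_eq_add_neg]
  have e2' : (∫ t in (0:ℝ)..h, (G (x + t) + G (x - t)))
      = (∫ t in (0:ℝ)..h, G (x + t)) + ∫ t in (0:ℝ)..h, G (x - t) :=
    intervalIntegral.integral_add (igr 0 h) isub
  have e2 : (∫ t in (-h)..h, G (x + t)) = ∫ t in (0:ℝ)..h, (G (x + t) + G (x - t)) := by
    rw [← intervalIntegral.integral_add_adjacent_intervals (igr (-h) 0) (igr 0 h), refl0, e2']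
    ring
  have e3 : 2 * h * G x = ∫ t in (0:ℝ)..h, 2 * G x := by
    rw [intervalIntegral.integral_const]
    simp
    ring
  have iadd2 : IntervalIntegrable (fun t => G (x + t) + G (x - t)) volume 0 h :=
    (igr 0 h).add isub
  rw [e1, e2, e3, ← intervalIntegral.integral_sub iadd2
    ((continuous_const : Continuous fun _ : ℝ => 2 * G x).intervalIntegrable 0 h)]
  have eval2 : (∫ t in (0:ℝ)..h, M * t ^ 2) = M * h ^ 3 / 3 := by
    rw [intervalIntegral.integral_const_mul, integral_pow]
    norm_num
    ring
  have bnd2 : ‖∫ t in (0:ℝ)..h, (G (x + t) + G (x - t) - 2 * G x)‖ ≤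
      |∫ t in (0:ℝ)..h, M * t ^ 2| := by
    apply intervalIntegral.norm_integral_le_abs_of_norm_le
    · filter_upwards [ae_restrict_mem (measurableSet_uIoc : MeasurableSet (Set.uIoc (0:ℝ) h))]
        with t ht
      have ht' : 0 ≤ t := by
        rcases Set.mem_uIoc.mp ht with h1 | h1
        · exact h1.1.le
        · linarith [h1.1, h1.2]
      rw [Real.norm_eq_abs]
      exact key t ht'
    · exact (continuous_const.mul (continuous_pow 2)).intervalIntegrable 0 h
  rw [eval2, abs_of_nonneg (by apply div_nonneg (mul_nonneg hM0 (pow_nonneg hh 3)); norm_num),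
    Real.norm_eq_abs] at bnd2
  exact bnd2


lemma stmt1intOnIoi (b : ℝ) : IntegrableOn (fun u : ℝ => exp (-2 * u)) (Ioi b) :=
  exp_neg_integrableOn_Ioi b two_pos

lemma stmt1intOnIic (a : ℝ) : IntegrableOn (fun u : ℝ => exp (2 * u)) (Iic a) := by
  have h := (Measure.measurePreserving_neg (volume : Measure ℝ)).integrableOn_comp_preimage
      (f := fun u : ℝ => exp (2 * u)) (s := Iic a) (Homeomorph.neg ℝ).measurableEmbedding
  rw [← h]
  simp only [Function.comp_def, neg_preimage, neg_Iic]
  have : (fun x : ℝ => exp (2 * -x)) = fun x : ℝ => exp (-2 * x) := by ext x; ring_nf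
  rw [this, integrableOn_Ici_iff_integrableOn_Ioi]
  exact stmt1intOnIoi (-a)

lemma stmt1tailIoi (b : ℝ) : ∫ u in Ioi b, exp (-2 * u) = exp (-2 * b) / 2 := by
  have h := integral_comp_mul_left_Ioi (fun x => exp (-x)) b (two_pos (α := ℝ))
  simp only [smul_eq_mul] at h
  have e : (fun x : ℝ => exp (-(2 * x))) = fun x : ℝ => exp (-2 * x) := by ext x; ring_nf
  rw [e] at h
  rw [h, integral_exp_neg_Ioi]
  ring_nf

lemma stmt1tailIic (a : ℝ) : ∫ u in Iic a, exp (2 * u) = exp (2 * a) / 2 := by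
  have h := integral_comp_neg_Iic a (fun x : ℝ => exp (-2 * x))
  have e : (fun x : ℝ => exp (-2 * -x)) = fun x : ℝ => exp (2 * x) := by ext x; ring_nf
  simp only [e] at h
  rw [h, stmt1tailIoi]
  ring_nf

lemma stmt1integrableG (G : ℝ → ℝ) (hc : Continuous G) (K : ℝ)
    (hdecay : ∀ u : ℝ, |G u| ≤ K * exp (-2 * |u|)) : Integrable G := by
  rw [← integrableOn_univ, ← Iio_union_Ici (a := (0:ℝ)), integrableOn_union]
  constructor
  · apply IntegrableOn.mono_set _ Iio_subset_Iic_self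
    apply Integrable.mono' ((stmt1intOnIic 0).const_mul K) hc.aestronglyMeasurable.restrict
    filter_upwards [ae_restrict_mem measurableSet_Iic] with u hu
    rw [Real.norm_eq_abs]
    calc |G u| ≤ K * exp (-2 * |u|) := hdecay u
      _ = K * exp (2 * u) := by rw [abs_of_nonpos hu]; ring_nf
  · rw [integrableOn_Ici_iff_integrableOn_Ioi]
    apply Integrable.mono' ((stmt1intOnIoi 0).const_mul K) hc.aestronglyMeasurable.restrict
    filter_upwards [ae_restrict_mem measurableSet_Ioi] with u hu
    rw [Real.norm_eq_abs]
    calc |G u| ≤ K * exp (-2 * |u|) := hdecay u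
      _ = K * exp (-2 * u) := by rw [abs_of_nonneg (le_of_lt hu)]

lemma stmt1tailboundIic (G : ℝ → ℝ) (K : ℝ)
    (hdecay : ∀ u : ℝ, |G u| ≤ K * exp (-2 * |u|)) (hint : Integrable G)
    (a : ℝ) (ha : a ≤ 0) : |∫ u in Iic a, G u| ≤ K * exp (2 * a) / 2 := by
  have h1 : |∫ u in Iic a, G u| ≤ ∫ u in Iic a, |G u| := by
    simpa [Real.norm_eq_abs] using
      norm_integral_le_integral_norm (μ := volume.restrict (Iic a)) G
  have h2 : ∫ u in Iic a, |G u| ≤ ∫ u in Iic a, K * exp (2 * u) := by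
    apply setIntegral_mono_on hint.abs.integrableOn ((stmt1intOnIic a).const_mul K)
      measurableSet_Iic
    intro u hu
    calc |G u| ≤ K * exp (-2 * |u|) := hdecay u
      _ = K * exp (2 * u) := by
          rw [abs_of_nonpos (le_trans (mem_Iic.mp hu) ha)]; ring_nf
  have h3 : ∫ u in Iic a, K * exp (2 * u) = K * exp (2 * a) / 2 := by
    rw [MeasureTheory.integral_const_mul, stmt1tailIic]; ring
  linarith

lemma stmt1tailboundIoi (G : ℝ → ℝ) (K : ℝ)
    (hdecay : ∀ u : ℝ, |G u| ≤ K * exp (-2 * |u|)) (hint : Integrable G)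
    (b : ℝ) (hb : 0 ≤ b) : |∫ u in Ioi b, G u| ≤ K * exp (-2 * b) / 2 := by
  have h1 : |∫ u in Ioi b, G u| ≤ ∫ u in Ioi b, |G u| := by
    simpa [Real.norm_eq_abs] using
      norm_integral_le_integral_norm (μ := volume.restrict (Ioi b)) G
  have h2 : ∫ u in Ioi b, |G u| ≤ ∫ u in Ioi b, K * exp (-2 * u) := by
    apply setIntegral_mono_on hint.abs.integrableOn ((stmt1intOnIoi b).const_mul K)
      measurableSet_Ioi
    intro u hu
    calc |G u| ≤ K * exp (-2 * |u|) := hdecay u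
      _ = K * exp (-2 * u) := by
          rw [abs_of_nonneg (le_trans hb (le_of_lt (mem_Ioi.mp hu)))]
  have h3 : ∫ u in Ioi b, K * exp (-2 * u) = K * exp (-2 * b) / 2 := by
    rw [MeasureTheory.integral_const_mul, stmt1tailIoi]; ring
  linarith

lemma stmt1splitI (G : ℝ → ℝ) (hint : Integrable G) (a b : ℝ) (hab : a ≤ b) :
    ∫ u, G u = (∫ u in Iic a, G u) + (∫ u in a..b, G u) + ∫ u in Ioi b, G u := by
  rw [intervalIntegral.integral_of_le hab]
  have e1 : ∫ u, G u = (∫ u in Iic b, G u) + ∫ u in Ioi b, G u := by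
    rw [← setIntegral_union (Iic_disjoint_Ioi le_rfl) measurableSet_Ioi
      hint.integrableOn hint.integrableOn, Iic_union_Ioi, setIntegral_univ]
  have e2 : ∫ u in Iic b, G u = (∫ u in Iic a, G u) + ∫ u in Ioc a b, G u := by
    rw [← setIntegral_union (Iic_disjoint_Ioc le_rfl) measurableSet_Ioc
      hint.integrableOn hint.integrableOn, Iic_union_Ioc_eq_Iic hab]
  rw [e1, e2]

lemma stmt1boundA (G : ℝ → ℝ) (K c v : ℝ) (hK : 0 < K) (hc : 0 < c)
    (hdecay : ∀ u : ℝ, |G u| ≤ K * exp (-2 * |u|)) (hv : 0 ≤ v) (n : ℕ) :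
    |G (n * c + v)| ≤ K * exp (-2 * c) ^ n := by
  calc |G (n * c + v)| ≤ K * exp (-2 * |n * c + v|) := hdecay _
    _ ≤ K * exp (-2 * c) ^ n := by
        rw [← Real.exp_nat_mul]
        apply mul_le_mul_of_nonneg_left _ hK.le
        apply Real.exp_le_exp.mpr
        rw [abs_of_nonneg (by positivity)]
        nlinarith [Nat.cast_nonneg (α := ℝ) n]

lemma stmt1boundB (G : ℝ → ℝ) (K c v : ℝ) (hK : 0 < K) (hc : 0 < c)
    (hdecay : ∀ u : ℝ, |G u| ≤ K * exp (-2 * |u|)) (hvc : v ≤ c) (n : ℕ) :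
    |G (-(n + 1 : ℝ) * c + v)| ≤ K * exp (-2 * c) ^ n := by
  calc |G (-(n + 1 : ℝ) * c + v)| ≤ K * exp (-2 * |(-(n + 1 : ℝ)) * c + v|) := hdecay _
    _ ≤ K * exp (-2 * c) ^ n := by
        rw [← Real.exp_nat_mul]
        apply mul_le_mul_of_nonneg_left _ hK.le
        apply Real.exp_le_exp.mpr
        have h0 : (0:ℝ) ≤ n := Nat.cast_nonneg n
        have hle : (-(n + 1 : ℝ)) * c + v ≤ -((n:ℝ) * c) := by nlinarith
        have : (n : ℝ) * c ≤ |(-(n + 1 : ℝ)) * c + v| := by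
          rw [abs_of_nonpos (by nlinarith)]
          linarith
        nlinarith

lemma stmt1geo_tail (r : ℝ) (h0 : 0 ≤ r) (h1 : r < 1) (K : ℝ) (k : ℕ) :
    ∑' i : ℕ, K * r ^ (i + k) = K * r ^ k * (1 - r)⁻¹ := by
  have : ∀ i : ℕ, K * r ^ (i + k) = (K * r ^ k) * r ^ i := by intro i; rw [pow_add]; ring
  rw [tsum_congr this, tsum_mul_left, tsum_geometric_of_lt_one h0 h1]

lemma stmt1reindex (f : ℤ → ℝ) (N : ℕ) :
    ∑ k ∈ Finset.range (2 * N + 1), f ((k : ℤ) - N)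
      = (∑ i ∈ Finset.range (N + 1), f i) + ∑ i ∈ Finset.range N, f (-(i + 1)) := by
  rw [Finset.range_eq_Ico, ← Finset.sum_Ico_consecutive _ (Nat.zero_le N)
    (by omega : N ≤ 2 * N + 1)]
  have h2 : ∑ k ∈ Finset.Ico N (2 * N + 1), f ((k : ℤ) - N)
      = ∑ i ∈ Finset.range (N + 1), f i := by
    rw [Finset.sum_Ico_eq_sum_range]
    apply Finset.sum_congr (by congr 1; omega)
    intro i _
    congr 1
    push_cast
    ring
  have h1 : ∑ k ∈ Finset.Ico 0 N, f ((k : ℤ) - N)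
      = ∑ i ∈ Finset.range N, f (-(i + 1)) := by
    rw [← Finset.range_eq_Ico, ← Finset.sum_range_reflect]
    apply Finset.sum_congr rfl
    intro i hi
    have : i < N := Finset.mem_range.mp hi
    congr 1
    omega
  rw [h1, h2, add_comm]

set_option maxHeartbeats 1000000 in
theorem stmt1 (G : ℝ → ℝ) (hG : ContDiff ℝ 2 G)
    (M : ℝ) (hM : ∀ u : ℝ, |deriv (deriv G) u| ≤ M)
    (K : ℝ) (hK : 0 < K) (hdecay : ∀ u : ℝ, |G u| ≤ K * Real.exp (-2 * |u|))
    (I : ℝ) (hI : I = ∫ u : ℝ, G u) :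
    ∃ P > 0, ∀ c ∈ Set.Ioo (0 : ℝ) (1 / Real.exp 1), ∀ v ∈ Set.Icc (0 : ℝ) c,
      ∀ N : ℕ, 0 < N →
        Summable (fun m : ℤ => |G (m * c + v)|) ∧
        |c * (∑' m : ℤ, G (m * c + v)) - I| ≤
          P * (N * c ^ 3 + Real.exp (-2 * N * c)) := by
  have hGc : Continuous G := hG.continuous
  have hM0 : 0 ≤ M := le_trans (abs_nonneg _) (hM 0)
  have hIntG : Integrable G := stmt1integrableG G hGc K hdecay
  refine ⟨M + 5 * K, by linarith, ?_⟩
  rintro c ⟨hc, hce⟩ v ⟨hv, hvc⟩ N hN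
  have hN1 : (1:ℝ) ≤ N := by exact_mod_cast hN
  -- basic facts about c
  have he1 : (1:ℝ) < exp 1 := by
    have := Real.exp_one_gt_d9; linarith
  have hc1 : c < 1 := lt_trans hce (by rw [div_lt_one (by linarith)]; exact he1)
  have hexp2c : exp (2 * c) ≤ 3 := by
    have h2c : 2 * c ≤ 1 := by
      have : c < 1 / exp 1 := hce
      have he2 : (2:ℝ) < exp 1 := by have := Real.exp_one_gt_d9; linarith
      have : c < 1 / 2 := lt_trans hce (by rw [div_lt_div_iff₀ (by linarith) (by norm_num)]; linarith)
      linarith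
    calc exp (2 * c) ≤ exp 1 := Real.exp_le_exp.mpr h2c
      _ ≤ 3 := by have := Real.exp_one_lt_d9; linarith
  set r := exp (-2 * c) with hr_def
  have hr0 : 0 < r := Real.exp_pos _
  have hr1 : r < 1 := by
    rw [hr_def, Real.exp_lt_one_iff]
    linarith
  have hrinv : r * exp (2 * c) = 1 := by
    rw [hr_def, ← Real.exp_add]; norm_num
  have hr3 : (1:ℝ)/3 ≤ r := by
    rw [div_le_iff₀ (by norm_num)]
    nlinarith [hr0.le]
  have h1mr : 2 * c / 3 ≤ 1 - r := by
    have h := Real.add_one_le_exp (2 * c)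
    -- (2c+1) * r ≤ 1
    have h2 : (2 * c + 1) * r ≤ 1 := by
      calc (2 * c + 1) * r ≤ exp (2 * c) * r := by nlinarith
        _ = 1 := by rw [mul_comm]; exact hrinv
    nlinarith
  have h1mrpos : 0 < 1 - r := by linarith
  have hinv : c * (1 - r)⁻¹ ≤ 3 / 2 := by
    rw [mul_inv_le_iff₀ h1mrpos]
    nlinarith
  -- the function f
  set f : ℤ → ℝ := fun m => G (m * c + v) with hf_def
  have hfnat : ∀ n : ℕ, f (n : ℤ) = G ((n:ℝ) * c + v) := by
    intro n; simp [hf_def]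
  have hfneg : ∀ n : ℕ, f (-((n:ℤ) + 1)) = G (-((n:ℝ) + 1) * c + v) := by
    intro n; simp only [hf_def]; congr 1; push_cast; ring
  -- summability
  have geo : ∀ K' : ℝ, Summable (fun n : ℕ => K' * r ^ n) := fun K' =>
    (summable_geometric_of_lt_one hr0.le hr1).mul_left K'
  have sA : Summable (fun n : ℕ => |f (n : ℤ)|) := by
    apply Summable.of_nonneg_of_le (fun n => abs_nonneg _) _ (geo K)
    intro n
    rw [hfnat n]
    exact stmt1boundA G K c v hK hc hdecay hv n
  have sB : Summable (fun n : ℕ => |f (-((n:ℤ) + 1))|) := by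
    apply Summable.of_nonneg_of_le (fun n => abs_nonneg _) _ (geo K)
    intro n
    rw [hfneg n]
    exact stmt1boundB G K c v hK hc hdecay hvc n
  have sabsZ : Summable (fun m : ℤ => |f m|) := Summable.of_nat_of_neg_add_one sA sB
  have sZ : Summable f := sabsZ.of_abs
  have sA0 : Summable (fun n : ℕ => f (n : ℤ)) := sA.of_abs
  have sB0 : Summable (fun n : ℕ => f (-((n:ℤ) + 1))) := sB.of_abs
  refine ⟨sabsZ, ?_⟩
  -- decomposition of the tsum
  have hsplit : ∑' m : ℤ, f m = (∑' n : ℕ, f (n : ℤ)) + ∑' n : ℕ, f (-((n:ℤ) + 1)) :=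
    tsum_of_nat_of_neg_add_one sA0 sB0
  have hA : (∑ i ∈ Finset.range (N + 1), f (i : ℤ)) + (∑' i : ℕ, f ((i + (N+1) : ℕ) : ℤ))
      = ∑' n : ℕ, f (n : ℤ) := sA0.sum_add_tsum_nat_add (N + 1)
  have hB : (∑ i ∈ Finset.range N, f (-((i:ℤ) + 1))) + (∑' i : ℕ, f (-(((i + N : ℕ) :ℤ) + 1)))
      = ∑' n : ℕ, f (-((n:ℤ) + 1)) := sB0.sum_add_tsum_nat_add N
  set tA := ∑' i : ℕ, f ((i + (N+1) : ℕ) : ℤ) with htA_def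
  set tB := ∑' i : ℕ, f (-(((i + N : ℕ) : ℤ) + 1)) with htB_def
  -- tail bounds
  have hsumtailA : Summable (fun i : ℕ => |f ((i + (N+1) : ℕ) : ℤ)|) :=
    sA.comp_injective (add_left_injective (N+1))
  have hsumtailB : Summable (fun i : ℕ => |f (-(((i + N : ℕ) : ℤ) + 1))|) :=
    sB.comp_injective (add_left_injective N)
  have hgeoA : Summable (fun i : ℕ => K * r ^ (i + (N+1))) :=
    (geo K).comp_injective (add_left_injective (N+1))
  have hgeoB : Summable (fun i : ℕ => K * r ^ (i + N)) :=
    (geo K).comp_injective (add_left_injective N)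
  have hrNnn : 0 ≤ r ^ N := pow_nonneg hr0.le N
  have hinvnn : 0 ≤ (1 - r)⁻¹ := inv_nonneg.mpr h1mrpos.le
  have htAbound : |tA| ≤ K * r ^ N * (1 - r)⁻¹ := by
    have habs : |tA| ≤ ∑' i : ℕ, |f ((i + (N+1) : ℕ) : ℤ)| := by
      rw [htA_def]
      simpa [Real.norm_eq_abs] using
        norm_tsum_le_tsum_norm (f := fun i : ℕ => f ((i + (N+1) : ℕ) : ℤ))
          (by simpa [Real.norm_eq_abs] using hsumtailA)
    have hcomp : (∑' i : ℕ, |f ((i + (N+1) : ℕ) : ℤ)|) ≤ ∑' i : ℕ, K * r ^ (i + (N+1)) := by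
      apply Summable.tsum_le_tsum _ hsumtailA hgeoA
      intro i
      rw [hfnat (i + (N+1)), hr_def]
      exact stmt1boundA G K c v hK hc hdecay hv (i + (N+1))
    have hval : (∑' i : ℕ, K * r ^ (i + (N+1))) = K * r ^ (N+1) * (1 - r)⁻¹ :=
      stmt1geo_tail r hr0.le hr1 K (N+1)
    have hstep : K * r ^ (N+1) * (1 - r)⁻¹ ≤ K * r ^ N * (1 - r)⁻¹ := by
      have h5 : r ^ (N+1) ≤ r ^ N := by
        rw [pow_succ]
        exact mul_le_of_le_one_right hrNnn hr1.le
      exact mul_le_mul_of_nonneg_right (mul_le_mul_of_nonneg_left h5 hK.le) hinvnn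
    linarith only [habs, hcomp, hval, hstep]
  have htBbound : |tB| ≤ K * r ^ N * (1 - r)⁻¹ := by
    have habs : |tB| ≤ ∑' i : ℕ, |f (-(((i + N : ℕ) : ℤ) + 1))| := by
      rw [htB_def]
      simpa [Real.norm_eq_abs] using
        norm_tsum_le_tsum_norm (f := fun i : ℕ => f (-(((i + N : ℕ) : ℤ) + 1)))
          (by simpa [Real.norm_eq_abs] using hsumtailB)
    have hcomp : (∑' i : ℕ, |f (-(((i + N : ℕ) : ℤ) + 1))|) ≤ ∑' i : ℕ, K * r ^ (i + N) := by
      apply Summable.tsum_le_tsum _ hsumtailB hgeoB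
      intro i
      rw [hfneg (i + N)]
      have := stmt1boundB G K c v hK hc hdecay hvc (i + N)
      convert this using 3 <;> push_cast <;> ring
    have hval : (∑' i : ℕ, K * r ^ (i + N)) = K * r ^ N * (1 - r)⁻¹ :=
      stmt1geo_tail r hr0.le hr1 K N
    linarith only [habs, hcomp, hval]
  -- the finite sum and the integral
  set S := ∑ k ∈ Finset.range (2*N+1), f ((k : ℤ) - N) with hS_def
  have hT : (∑' m : ℤ, f m) = S + tA + tB := by
    rw [hsplit, ← hA, ← hB, hS_def, stmt1reindex f N]
    ring
  set a : ℕ → ℝ := fun k => ((k:ℝ) - N) * c + v - c/2 with ha_def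
  have hJ : (∑ k ∈ Finset.range (2*N+1), ∫ x in (a k)..(a (k+1)), G x)
      = ∫ x in (a 0)..(a (2*N+1)), G x :=
    intervalIntegral.sum_integral_adjacent_intervals (fun k _ => hGc.intervalIntegrable _ _)
  set J := ∫ x in (a 0)..(a (2*N+1)), G x with hJ_def
  have hpiece : ∀ k : ℕ, |(∫ x in (a k)..(a (k+1)), G x) - c * f ((k:ℤ) - N)| ≤ M * (c/2)^3 / 3 := by
    intro k
    have hx : f ((k:ℤ) - N) = G (((k:ℝ) - N) * c + v) := by
      simp only [hf_def]
      congr 2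
      push_cast
      ring
    have e1 : a k = (((k:ℝ) - N) * c + v) - c/2 := by simp only [ha_def]
    have e2 : a (k+1) = (((k:ℝ) - N) * c + v) + c/2 := by simp only [ha_def]; push_cast; ring
    have hmid := stmt1midpt G hG M hM (((k:ℝ) - N) * c + v) (c/2) (by linarith)
    rw [hx, e1, e2]
    have : c * G (((k:ℝ) - N) * c + v) = 2 * (c/2) * G (((k:ℝ) - N) * c + v) := by ring
    rw [this]
    exact hmid
  have hJS : |J - c * S| ≤ (2*(N:ℝ)+1) * (M * (c/2)^3 / 3) := by
    have hdiff : J - c * S = ∑ k ∈ Finset.range (2*N+1),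
        ((∫ x in (a k)..(a (k+1)), G x) - c * f ((k:ℤ) - N)) := by
      rw [Finset.sum_sub_distrib, hJ, hS_def, Finset.mul_sum]
    rw [hdiff]
    calc |∑ k ∈ Finset.range (2*N+1), ((∫ x in (a k)..(a (k+1)), G x) - c * f ((k:ℤ) - N))|
        ≤ ∑ k ∈ Finset.range (2*N+1),
            |(∫ x in (a k)..(a (k+1)), G x) - c * f ((k:ℤ) - N)| :=
          Finset.abs_sum_le_sum_abs _ _
      _ ≤ ∑ _k ∈ Finset.range (2*N+1), (M * (c/2)^3 / 3) :=
          Finset.sum_le_sum (fun k _ => hpiece k)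
      _ = (2*(N:ℝ)+1) * (M * (c/2)^3 / 3) := by
          rw [Finset.sum_const, Finset.card_range, nsmul_eq_mul]
          push_cast
          ring
  -- splitting the integral I
  have ha0 : a 0 = -(N:ℝ)*c + v - c/2 := by simp only [ha_def]; push_cast; ring
  have haL : a (2*N+1) = (N:ℝ)*c + v + c/2 := by simp only [ha_def]; push_cast; ring
  have hNc : c ≤ (N:ℝ)*c := le_mul_of_one_le_left hc.le hN1
  have hNc0 : 0 ≤ (N:ℝ)*c := by positivity
  have haord : a 0 ≤ a (2*N+1) := by rw [ha0, haL]; linarith only [hNc0, hc]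
  have hIsplit : I = (∫ u in Iic (a 0), G u) + J + ∫ u in Ioi (a (2*N+1)), G u := by
    rw [hI, hJ_def]
    exact stmt1splitI G hIntG _ _ haord
  have ha0neg : a 0 ≤ 0 := by rw [ha0]; linarith only [hvc, hNc, hc]
  have haLpos : 0 ≤ a (2*N+1) := by rw [haL]; linarith only [hNc0, hv, hc]
  have hT1 : |∫ u in Iic (a 0), G u| ≤ K * exp (2 * a 0) / 2 :=
    stmt1tailboundIic G K hdecay hIntG _ ha0neg
  have hT2 : |∫ u in Ioi (a (2*N+1)), G u| ≤ K * exp (-2 * a (2*N+1)) / 2 :=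
    stmt1tailboundIoi G K hdecay hIntG _ haLpos
  have hrN : r ^ N = exp (-2 * N * c) := by
    rw [hr_def, ← Real.exp_nat_mul]
    ring_nf
  have hexpa0 : exp (2 * a 0) ≤ 3 * exp (-2 * N * c) := by
    calc exp (2 * a 0) ≤ exp (-2 * N * c + 2 * c) := by
          apply Real.exp_le_exp.mpr
          rw [ha0]
          ring_nf
          linarith only [hvc, hc]
      _ = exp (-2 * N * c) * exp (2 * c) := by rw [← Real.exp_add]
      _ ≤ 3 * exp (-2 * N * c) := by
          have h6 := mul_le_mul_of_nonneg_left hexp2c (Real.exp_pos (-2 * (N:ℝ) * c)).le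
          linarith only [h6]
  have hexpaL : exp (-2 * a (2*N+1)) ≤ exp (-2 * N * c) := by
    apply Real.exp_le_exp.mpr
    rw [haL]
    linarith only [hv, hc, hNc0]
  -- final assembly
  have hE : 0 < exp (-2 * (N:ℝ) * c) := Real.exp_pos _
  have hfinal : c * (∑' m : ℤ, f m) - I
      = (c * S - J) + c * tA + c * tB
        - (∫ u in Iic (a 0), G u) - ∫ u in Ioi (a (2*N+1)), G u := by
    rw [hT, hIsplit]
    ring
  have habs_total : |c * (∑' m : ℤ, f m) - I|
      ≤ |J - c * S| + c * |tA| + c * |tB|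
        + |∫ u in Iic (a 0), G u| + |∫ u in Ioi (a (2*N+1)), G u| := by
    rw [hfinal]
    have h1 : |(c * S - J) + c * tA + c * tB
        - (∫ u in Iic (a 0), G u) - ∫ u in Ioi (a (2*N+1)), G u|
        ≤ |c * S - J| + |c * tA| + |c * tB|
          + |∫ u in Iic (a 0), G u| + |∫ u in Ioi (a (2*N+1)), G u| := by
      calc _ ≤ |(c * S - J) + c * tA + c * tB - (∫ u in Iic (a 0), G u)|
              + |∫ u in Ioi (a (2*N+1)), G u| := abs_sub _ _
        _ ≤ _ := by
            have h2 := abs_sub ((c * S - J) + c * tA + c * tB) (∫ u in Iic (a 0), G u)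
            have h3 := abs_add_le ((c * S - J) + c * tA) (c * tB)
            have h4 := abs_add_le (c * S - J) (c * tA)
            linarith only [h2, h3, h4]
    rw [abs_mul c tA, abs_mul c tB, abs_of_pos hc] at h1
    rw [abs_sub_comm (c * S) J] at h1
    exact h1
  have bnd1 : |J - c * S| ≤ M * N * c^3 := by
    have h24 : (2*(N:ℝ)+1) ≤ 24*N := by linarith only [hN1]
    have hMc3 : (0:ℝ) ≤ M * c^3 / 24 := by positivity
    calc |J - c * S| ≤ (2*(N:ℝ)+1) * (M * (c/2)^3 / 3) := hJS
      _ = (2*(N:ℝ)+1) * (M * c^3 / 24) := by ring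
      _ ≤ 24*(N:ℝ) * (M * c^3 / 24) := mul_le_mul_of_nonneg_right h24 hMc3
      _ = M * N * c^3 := by ring
  have bnd2 : c * |tA| + c * |tB| ≤ 3 * K * exp (-2 * N * c) := by
    have hKr : (0:ℝ) ≤ K * r ^ N := mul_nonneg hK.le hrNnn
    have htA' : c * |tA| ≤ 3/2 * (K * r ^ N) := by
      calc c * |tA| ≤ c * (K * r ^ N * (1 - r)⁻¹) := mul_le_mul_of_nonneg_left htAbound hc.le
        _ = (K * r ^ N) * (c * (1 - r)⁻¹) := by ring
        _ ≤ (K * r ^ N) * (3/2) := mul_le_mul_of_nonneg_left hinv hKr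
        _ = 3/2 * (K * r ^ N) := by ring
    have htB' : c * |tB| ≤ 3/2 * (K * r ^ N) := by
      calc c * |tB| ≤ c * (K * r ^ N * (1 - r)⁻¹) := mul_le_mul_of_nonneg_left htBbound hc.le
        _ = (K * r ^ N) * (c * (1 - r)⁻¹) := by ring
        _ ≤ (K * r ^ N) * (3/2) := mul_le_mul_of_nonneg_left hinv hKr
        _ = 3/2 * (K * r ^ N) := by ring
    rw [← hrN]
    linarith only [htA', htB']
  have bnd3 : |∫ u in Iic (a 0), G u| + |∫ u in Ioi (a (2*N+1)), G u|
      ≤ 2 * K * exp (-2 * N * c) := by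
    have e1 : K * exp (2 * a 0) / 2 ≤ 3/2 * K * exp (-2 * N * c) := by
      have h7 := mul_le_mul_of_nonneg_left hexpa0 hK.le
      linarith only [h7]
    have e2 : K * exp (-2 * a (2*N+1)) / 2 ≤ 1/2 * K * exp (-2 * N * c) := by
      have h8 := mul_le_mul_of_nonneg_left hexpaL hK.le
      linarith only [h8]
    linarith only [hT1, hT2, e1, e2]
  calc |c * (∑' m : ℤ, f m) - I|
      ≤ |J - c * S| + c * |tA| + c * |tB|
        + |∫ u in Iic (a 0), G u| + |∫ u in Ioi (a (2*N+1)), G u| := habs_total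
    _ ≤ M * N * c^3 + 3 * K * exp (-2 * N * c) + 2 * K * exp (-2 * N * c) := by
        linarith only [bnd1, bnd2, bnd3]
    _ ≤ (M + 5 * K) * (N * c^3 + exp (-2 * N * c)) := by
        have hNc3 : 0 ≤ (N:ℝ) * c^3 := by positivity
        have p1 : 0 ≤ M * exp (-2 * (N:ℝ) * c) := mul_nonneg hM0 hE.le
        have p2 : 0 ≤ K * ((N:ℝ) * c^3) := mul_nonneg hK.le hNc3
        have hexpand : (M + 5 * K) * ((N:ℝ) * c^3 + exp (-2 * N * c))
            = M * N * c^3 + 5 * K * exp (-2 * N * c)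
              + (M * exp (-2 * (N:ℝ) * c) + 5 * (K * ((N:ℝ) * c^3))) := by ring
        rw [hexpand]
        linarith only [p1, p2]
end

section
/- Let a > 1, let f : ℝ → ℂ be a Schwartz function, set g(λ) = λ·f(λ), and let u(λ) = ∑_{j∈ℤ} |g(a^{2j}λ)|² for λ > 0. Then inf_{λ>0} u(λ) > 0 (Daubechies' criterion holds) if and only if there does not exist λ₀ > 0 such that g(a^{2j}λ₀) = 0 for every integer j. -/
theorem stmt3 (a : ℝ) (ha : 1 < a) (f : SchwartzMap ℝ ℂ)
    (g : ℝ → ℂ) (hg : ∀ l : ℝ, g l = (l : ℂ) * f l)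
    (u : ℝ → ℝ) (hu : ∀ l : ℝ, u l = ∑' j : ℤ, ‖g (a ^ (2 * j) * l)‖ ^ 2) :
    (0 < ⨅ l : Set.Ioi (0 : ℝ), u l) ↔
      ¬∃ l₀ : ℝ, 0 < l₀ ∧ ∀ j : ℤ, g (a ^ (2 * j) * l₀) = 0 := by
  have ha0 : (0:ℝ) < a := lt_trans one_pos ha
  have hane : a ≠ 0 := ha0.ne'
  -- bounds on g
  obtain ⟨C₀, hC₀pos, hC₀⟩ := f.decay 0 0
  obtain ⟨C₂, hC₂pos, hC₂⟩ := f.decay 2 0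
  have hf0 : ∀ x : ℝ, ‖f x‖ ≤ C₀ := by
    intro x
    have := hC₀ x
    simpa [norm_iteratedFDeriv_zero] using this
  have hf2 : ∀ x : ℝ, |x| ^ 2 * ‖f x‖ ≤ C₂ := by
    intro x
    have := hC₂ x
    simpa [norm_iteratedFDeriv_zero, Real.norm_eq_abs] using this
  have hgn : ∀ y : ℝ, ‖g y‖ = |y| * ‖f y‖ := by
    intro y; rw [hg]; simp [Complex.norm_real]
  have hgb1 : ∀ y : ℝ, ‖g y‖ ≤ C₀ * |y| := by
    intro y; rw [hgn, mul_comm]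
    exact mul_le_mul_of_nonneg_right (hf0 y) (abs_nonneg y)
  have hgb2 : ∀ y : ℝ, 0 < y → ‖g y‖ ≤ C₂ / y := by
    intro y hy
    rw [hgn, abs_of_pos hy, le_div_iff₀ hy]
    calc y * ‖f y‖ * y = |y| ^ 2 * ‖f y‖ := by rw [abs_of_pos hy]; ring
    _ ≤ C₂ := hf2 y
  -- uniform geometric bound on terms over [m, M]
  set r : ℝ := (a ^ (4:ℕ))⁻¹ with hrdef
  have hr0 : 0 ≤ r := by positivity
  have hr1 : r < 1 := by
    rw [hrdef, inv_lt_one_iff₀]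
    right; exact one_lt_pow₀ ha (by norm_num)
  have hbound : ∀ m M : ℝ, 0 < m → ∀ j : ℤ, ∀ x ∈ Set.Icc m M,
      ‖g (a ^ (2 * j) * x)‖ ^ 2 ≤ max ((C₂ / m) ^ 2) (C₀ ^ 2 * M ^ 2) * r ^ j.natAbs := by
    intro m M hm j x hx
    have hxm : m ≤ x := hx.1
    have hxM : x ≤ M := hx.2
    have hx0 : 0 < x := lt_of_lt_of_le hm hxm
    have hM0 : 0 < M := lt_of_lt_of_le hx0 hxM
    set n := j.natAbs with hn
    rcases le_or_gt 0 j with hj | hj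
    · -- j ≥ 0 : use decay bound
      have hpow : a ^ (2 * j) = (a ^ (2:ℕ)) ^ n := by
        rw [show (2 * j) = ((2 * n : ℕ) : ℤ) by omega, zpow_natCast, pow_mul]
      have hap : (0:ℝ) < (a ^ (2:ℕ)) ^ n := by positivity
      have h1 : ‖g (a ^ (2 * j) * x)‖ ≤ C₂ / ((a ^ (2:ℕ)) ^ n * m) := by
        rw [hpow]
        refine (hgb2 _ (by positivity)).trans ?_
        apply div_le_div_of_nonneg_left hC₂pos.le (by positivity)
        exact mul_le_mul_of_nonneg_left hxm hap.le
      have h2 : ‖g (a ^ (2 * j) * x)‖ ^ 2 ≤ (C₂ / ((a ^ (2:ℕ)) ^ n * m)) ^ 2 :=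
        pow_le_pow_left₀ (norm_nonneg _) h1 2
      have h3 : (C₂ / ((a ^ (2:ℕ)) ^ n * m)) ^ 2 = (C₂ / m) ^ 2 * r ^ n := by
        rw [hrdef]
        field_simp
        ring_nf
        rw [← mul_pow, mul_inv_cancel₀ hane, one_pow]
      refine h2.trans ?_
      rw [h3]
      exact mul_le_mul_of_nonneg_right (le_max_left _ _) (by positivity)
    · -- j < 0 : use boundedness of f
      have hpow : a ^ (2 * j) = ((a ^ (2:ℕ)) ^ n)⁻¹ := by
        rw [show (2 * j) = -((2 * n : ℕ) : ℤ) by omega, zpow_neg, zpow_natCast, pow_mul]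
      have hap : (0:ℝ) < (a ^ (2:ℕ)) ^ n := by positivity
      have h1 : ‖g (a ^ (2 * j) * x)‖ ≤ C₀ * (((a ^ (2:ℕ)) ^ n)⁻¹ * M) := by
        rw [hpow]
        refine (hgb1 _).trans ?_
        have hy0 : (0:ℝ) < ((a ^ (2:ℕ)) ^ n)⁻¹ * x := by positivity
        rw [abs_of_pos hy0]
        exact mul_le_mul_of_nonneg_left
          (mul_le_mul_of_nonneg_left hxM (by positivity)) hC₀pos.le
      have h2 : ‖g (a ^ (2 * j) * x)‖ ^ 2 ≤ (C₀ * (((a ^ (2:ℕ)) ^ n)⁻¹ * M)) ^ 2 :=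
        pow_le_pow_left₀ (norm_nonneg _) h1 2
      have h3 : (C₀ * (((a ^ (2:ℕ)) ^ n)⁻¹ * M)) ^ 2 = C₀ ^ 2 * M ^ 2 * r ^ n := by
        rw [hrdef]
        field_simp
        ring_nf
        rw [← mul_pow, mul_inv_cancel₀ hane, one_pow]
      refine h2.trans ?_
      rw [h3]
      exact mul_le_mul_of_nonneg_right (le_max_right _ _) (by positivity)
  -- the geometric majorant is summable
  have hsumgeo : ∀ K : ℝ, Summable (fun j : ℤ => K * r ^ j.natAbs) := by
    intro K
    apply Summable.of_nat_of_neg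
    · simpa using ((summable_geometric_of_lt_one hr0 hr1).mul_left K)
    · simpa using ((summable_geometric_of_lt_one hr0 hr1).mul_left K)
  -- summability of the series at each positive point
  have hsummable : ∀ x : ℝ, 0 < x →
      Summable (fun j : ℤ => ‖g (a ^ (2 * j) * x)‖ ^ 2) := by
    intro x hx
    refine Summable.of_nonneg_of_le (fun j => by positivity)
      (fun j => hbound x x hx j x ⟨le_refl x, le_refl x⟩) (hsumgeo _)
  -- nonnegativity of u
  have hunonneg : ∀ x : ℝ, 0 ≤ u x := by
    intro x
    rw [hu]
    exact tsum_nonneg fun j => by positivity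
  -- periodicity : u (a ^ (2n) * x) = u x
  have hper : ∀ (n : ℤ) (x : ℝ), u (a ^ (2 * n) * x) = u x := by
    intro n x
    rw [hu, hu]
    have key : ∀ j : ℤ, a ^ (2 * j) * (a ^ (2 * n) * x) = a ^ (2 * (j + n)) * x := by
      intro j
      rw [← mul_assoc, ← zpow_add₀ hane, mul_add]
    calc (∑' j : ℤ, ‖g (a ^ (2 * j) * (a ^ (2 * n) * x))‖ ^ 2)
        = ∑' j : ℤ, ‖g (a ^ (2 * (j + n)) * x)‖ ^ 2 := by
          exact tsum_congr fun j => by rw [key]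
      _ = ∑' j : ℤ, ‖g (a ^ (2 * j) * x)‖ ^ 2 := by
          exact (Equiv.addRight n).tsum_eq (fun j => ‖g (a ^ (2 * j) * x)‖ ^ 2)
  -- every positive point has a representative in [1, a^2]
  have hrep : ∀ x : ℝ, 0 < x → ∃ y ∈ Set.Icc (1:ℝ) (a ^ 2), u x = u y := by
    intro x hx
    have ha2 : 1 < a ^ 2 := by nlinarith
    obtain ⟨n, hn1, hn2⟩ := exists_mem_Ico_zpow hx ha2
    have hane2 : (a:ℝ) ^ 2 ≠ 0 := by positivity
    have hcpos : (0:ℝ) < (a ^ 2) ^ (-n) := zpow_pos (by positivity) _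
    refine ⟨(a ^ 2) ^ (-n) * x, ⟨?_, ?_⟩, ?_⟩
    · have h := mul_le_mul_of_nonneg_left hn1 hcpos.le
      rwa [← zpow_add₀ hane2, neg_add_cancel, zpow_zero] at h
    · have h := mul_le_mul_of_nonneg_left hn2.le hcpos.le
      rw [← zpow_add₀ hane2, show -n + (n + 1) = 1 by ring, zpow_one] at h
      exact h
    · have hzz : (a ^ 2 : ℝ) ^ (-n) = a ^ (2 * (-n)) := by
        rw [← zpow_natCast a 2, ← zpow_mul]
        norm_num
      rw [hzz, hper]
  -- continuity of u on [1, a^2]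
  have hcont : ContinuousOn u (Set.Icc (1:ℝ) (a ^ 2)) := by
    have hgc : Continuous g := by
      have : g = fun l : ℝ => (l : ℂ) * f l := funext hg
      rw [this]
      exact Complex.continuous_ofReal.mul f.continuous
    have : ContinuousOn (fun x : ℝ => ∑' j : ℤ, ‖g (a ^ (2 * j) * x)‖ ^ 2)
        (Set.Icc (1:ℝ) (a ^ 2)) := by
      refine continuousOn_tsum (fun j => ?_) (hsumgeo (max ((C₂ / 1) ^ 2) (C₀ ^ 2 * (a ^ 2) ^ 2)))
        (fun j x hx => ?_)
      · exact ((hgc.comp (continuous_const.mul continuous_id)).norm.pow 2).continuousOn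
      · have h := hbound 1 (a ^ 2) one_pos j x hx
        rwa [Real.norm_eq_abs, abs_of_nonneg (by positivity)]
    exact this.congr fun x _ => hu x
  constructor
  · -- forward: positive infimum → no common zero
    intro hinf hex
    obtain ⟨l₀, hl₀, hzero⟩ := hex
    have hul₀ : u l₀ = 0 := by
      rw [hu]
      simp [hzero]
    have hb : BddBelow (Set.range fun l : Set.Ioi (0:ℝ) => u l) := by
      refine ⟨0, ?_⟩
      rintro y ⟨l, rfl⟩
      exact hunonneg l
    have := ciInf_le hb (⟨l₀, hl₀⟩ : Set.Ioi (0:ℝ))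
    simp only at this
    rw [hul₀] at this
    exact absurd (lt_of_lt_of_le hinf this) (lt_irrefl 0)
  · -- backward: no common zero → positive infimum
    intro hnex
    push_neg at hnex
    -- minimum on the compact set [1, a^2]
    have ha2 : (1:ℝ) ≤ a ^ 2 := by nlinarith
    obtain ⟨x₀, hx₀mem, hx₀min⟩ :=
      isCompact_Icc.exists_isMinOn (Set.nonempty_Icc.mpr ha2) hcont
    have hx₀pos : 0 < x₀ := lt_of_lt_of_le one_pos hx₀mem.1
    obtain ⟨j₀, hj₀⟩ := hnex x₀ hx₀pos
    have hterm : 0 < ‖g (a ^ (2 * j₀) * x₀)‖ ^ 2 := pow_pos (norm_pos_iff.mpr hj₀) 2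
    have hux₀ : 0 < u x₀ := by
      rw [hu]
      refine lt_of_lt_of_le hterm ?_
      exact Summable.le_tsum (hsummable x₀ hx₀pos) j₀ (fun j _ => by positivity)
    refine lt_of_lt_of_le hux₀ (le_ciInf ?_)
    rintro ⟨l, hl⟩
    obtain ⟨y, hy, hxy⟩ := hrep l hl
    rw [hxy]
    exact hx₀min hy
end
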